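/- arXiv:1612.06095 — 6 statements merged into one kernel-verified Lean document; each statement's English description precedes it below -/
import Mathlib

section
/- Let f:[0,1]→ℝ be continuous, J⊂[0,1] an interval, and n∈ℕ. Then the total variation of f^n restricted to f(J) is at most the total variation of f^{n+1} restricted to J. -/
lemma lift_mono (f : ℝ → ℝ) {c d : ℝ} (hcd : c ≤ d) (hf : ContinuousOn f (Set.Icc c d))
    (y : ℕ → ℝ) (hy : Monotone y) (hy1 : ∀ i, f c ≤ y i) (hy2 : ∀ i, y i ≤ f d) :
    ∃ x : ℕ → ℝ, Monotone x ∧ (∀ i, x i ∈ Set.Icc c d) ∧ ∀ i, f (x i) = y i := by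
  set S : ℕ → Set ℝ := fun i => Set.Icc c d ∩ f ⁻¹' {y i} with hS
  have hSsub : ∀ i, S i ⊆ Set.Icc c d := fun i => Set.inter_subset_left
  have hSne : ∀ i, (S i).Nonempty := by
    intro i
    obtain ⟨t, ht, hft⟩ := intermediate_value_Icc hcd hf ⟨hy1 i, hy2 i⟩
    exact ⟨t, ht, by simp [hft]⟩
  have hScl : ∀ i, IsClosed (S i) :=
    fun i => hf.preimage_isClosed_of_isClosed isClosed_Icc isClosed_singleton
  have hSbdd : ∀ i, BddBelow (S i) := fun i => bddBelow_Icc.mono (hSsub i)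
  refine ⟨fun i => sInf (S i), ?_, ?_, ?_⟩
  · intro i j hij
    have hmemj : sInf (S j) ∈ S j := (hScl j).csInf_mem (hSne j) (hSbdd j)
    have hj1 : sInf (S j) ∈ Set.Icc c d := hmemj.1
    have hfj : f (sInf (S j)) = y j := hmemj.2
    have hsub : Set.Icc c (sInf (S j)) ⊆ Set.Icc c d := Set.Icc_subset_Icc le_rfl hj1.2
    obtain ⟨t, ht, hft⟩ := intermediate_value_Icc hj1.1 (hf.mono hsub)
      (⟨hy1 i, by rw [hfj]; exact hy hij⟩ : y i ∈ Set.Icc (f c) (f (sInf (S j))))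
    have : t ∈ S i := ⟨hsub ht, by simp [hft]⟩
    exact le_trans (csInf_le (hSbdd i) this) ht.2
  · exact fun i => ((hScl i).csInf_mem (hSne i) (hSbdd i)).1
  · exact fun i => ((hScl i).csInf_mem (hSne i) (hSbdd i)).2

lemma lift_anti (f : ℝ → ℝ) {c d : ℝ} (hcd : c ≤ d) (hf : ContinuousOn f (Set.Icc c d))
    (y : ℕ → ℝ) (hy : Monotone y) (hy1 : ∀ i, f d ≤ y i) (hy2 : ∀ i, y i ≤ f c) :
    ∃ x : ℕ → ℝ, Antitone x ∧ (∀ i, x i ∈ Set.Icc c d) ∧ ∀ i, f (x i) = y i := by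
  set F : ℝ → ℝ := fun t => f (c + d - t) with hF
  have hmaps : Set.MapsTo (fun t : ℝ => c + d - t) (Set.Icc c d) (Set.Icc c d) := by
    intro t ht
    refine ⟨?_, ?_⟩ <;> simp only <;> linarith [ht.1, ht.2]
  have hFc : ContinuousOn F (Set.Icc c d) :=
    hf.comp (Continuous.continuousOn (by fun_prop)) hmaps
  have hFc1 : F c = f d := by simp [hF]
  have hFd1 : F d = f c := by simp [hF]
  obtain ⟨x, hxm, hxmem, hxf⟩ := lift_mono F hcd hFc y hy
    (fun i => by rw [hFc1]; exact hy1 i) (fun i => by rw [hFd1]; exact hy2 i)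
  refine ⟨fun i => c + d - x i, ?_, ?_, ?_⟩
  · intro i j hij; have := hxm hij; simp only; linarith
  · intro i; have := hxmem i; refine ⟨?_, ?_⟩ <;> simp only <;> linarith [this.1, this.2]
  · intro i; have := hxf i; simpa [hF] using this

lemma eVariationOn_comp_image_le (f g : ℝ → ℝ) (hf : ContinuousOn f (Set.Icc 0 1))
    (J : Set ℝ) (hJ : J ⊆ Set.Icc 0 1) (hJint : J.OrdConnected) :
    eVariationOn g (f '' J) ≤ eVariationOn (g ∘ f) J := by
  apply iSup_le
  rintro ⟨m, u, hu, us⟩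
  simp only
  -- choose preimages
  have hex : ∀ i : ℕ, ∃ t, t ∈ J ∧ f t = u i := by
    intro i; obtain ⟨t, ht, hft⟩ := us i; exact ⟨t, ht, hft⟩
  choose p hpJ hpf using hex
  set q : ℕ → ℝ := fun i => p (min i m) with hq
  have hne : (Finset.range (m + 1)).Nonempty := ⟨0, by simp⟩
  set a : ℝ := (Finset.range (m + 1)).inf' hne p with ha
  set b : ℝ := (Finset.range (m + 1)).sup' hne p with hb
  obtain ⟨ia, hia, haeq⟩ := Finset.exists_mem_eq_inf' hne p
  obtain ⟨ib, hib, hbeq⟩ := Finset.exists_mem_eq_sup' hne p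
  have haJ : a ∈ J := by rw [ha, haeq]; exact hpJ ia
  have hbJ : b ∈ J := by rw [hb, hbeq]; exact hpJ ib
  have hab : a ≤ b := by
    exact le_trans (Finset.inf'_le p (by simp : 0 ∈ Finset.range (m+1)))
      (Finset.le_sup' p (by simp : 0 ∈ Finset.range (m+1)))
  have hIJ : Set.Icc a b ⊆ J := hJint.out haJ hbJ
  have hqmem : ∀ i, q i ∈ Set.Icc a b := by
    intro i
    have hm : min i m ∈ Finset.range (m + 1) := by
      simp [Nat.lt_succ_iff]
    exact ⟨Finset.inf'_le p hm, Finset.le_sup' p hm⟩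
  have hfab : ContinuousOn f (Set.Icc a b) :=
    hf.mono (fun t ht => hJ (hIJ ht))
  obtain ⟨c, hcmem, hc⟩ := isCompact_Icc.exists_isMinOn (Set.nonempty_Icc.2 hab) hfab
  obtain ⟨d, hdmem, hd⟩ := isCompact_Icc.exists_isMaxOn (Set.nonempty_Icc.2 hab) hfab
  set u' : ℕ → ℝ := fun i => u (min i m) with hu'
  have hu'mono : Monotone u' := fun i j hij => hu (min_le_min_right m hij)
  have hqf : ∀ i, f (q i) = u' i := fun i => hpf (min i m)
  have hlow : ∀ i, f c ≤ u' i := fun i => (hqf i) ▸ hc (hqmem i)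
  have hhigh : ∀ i, u' i ≤ f d := fun i => (hqf i) ▸ hd (hqmem i)
  have hueq : ∀ i ≤ m, u i = u' i := by
    intro i hi; simp [hu', min_eq_left hi]
  rcases le_total c d with hcd | hdc
  · -- monotone case
    have hsub : Set.Icc c d ⊆ Set.Icc a b := Set.Icc_subset_Icc hcmem.1 hdmem.2
    obtain ⟨x, hxm, hxmem, hxf⟩ := lift_mono f hcd (hfab.mono hsub) u' hu'mono hlow hhigh
    have hxJ : ∀ i, x i ∈ J := fun i => hIJ (hsub (hxmem i))
    calc ∑ i ∈ Finset.range m, edist (g (u (i + 1))) (g (u i))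
        = ∑ i ∈ Finset.range m, edist ((g ∘ f) (x (i + 1))) ((g ∘ f) (x i)) := by
          apply Finset.sum_congr rfl
          intro i hi
          have hi' := Finset.mem_range.1 hi
          rw [hueq i (by omega), hueq (i+1) (by omega), ← hxf i, ← hxf (i+1)]
          rfl
      _ ≤ eVariationOn (g ∘ f) J := eVariationOn.sum_le hxm hxJ
  · -- antitone case
    have hsub : Set.Icc d c ⊆ Set.Icc a b := Set.Icc_subset_Icc hdmem.1 hcmem.2
    obtain ⟨x, hxm, hxmem, hxf⟩ := lift_anti f hdc (hfab.mono hsub) u' hu'mono hlow hhigh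
    have hxJ : ∀ i, x i ∈ J := fun i => hIJ (hsub (hxmem i))
    set x' : ℕ → ℝ := fun i => x (m - i) with hx'
    have hx'm : Monotone x' := fun i j hij => hxm (Nat.sub_le_sub_left hij m)
    have hx'J : ∀ i, x' i ∈ J := fun i => hxJ _
    calc ∑ i ∈ Finset.range m, edist (g (u (i + 1))) (g (u i))
        = ∑ i ∈ Finset.range m, edist ((g ∘ f) (x (i + 1))) ((g ∘ f) (x i)) := by
          apply Finset.sum_congr rfl
          intro i hi
          have hi' := Finset.mem_range.1 hi
          rw [hueq i (by omega), hueq (i+1) (by omega), ← hxf i, ← hxf (i+1)]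
          rfl
      _ = ∑ i ∈ Finset.range m, edist ((g ∘ f) (x' (i + 1))) ((g ∘ f) (x' i)) := by
          rw [← Finset.sum_range_reflect
            (fun i => edist ((g ∘ f) (x (i + 1))) ((g ∘ f) (x i))) m]
          apply Finset.sum_congr rfl
          intro i hi
          have hi' := Finset.mem_range.1 hi
          have h1 : m - 1 - i + 1 = m - i := by omega
          have h2 : m - (i + 1) = m - 1 - i := by omega
          simp only [hx', h1, h2]
          exact edist_comm _ _
      _ ≤ eVariationOn (g ∘ f) J := eVariationOn.sum_le hx'm hx'J

/-- Let `f : [0,1] → [0,1]` be continuous, `J ⊆ [0,1]` an interval, `n ∈ ℕ`.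
Then `Var f^n|_{f(J)} ≤ Var f^{n+1}|_J`. -/
theorem eVariationOn_iterate_image_le (f : ℝ → ℝ)
    (hf : ContinuousOn f (Set.Icc 0 1))
    (hmaps : Set.MapsTo f (Set.Icc 0 1) (Set.Icc 0 1))
    (J : Set ℝ) (hJ : J ⊆ Set.Icc 0 1) (hJint : J.OrdConnected) (n : ℕ) :
    eVariationOn (f^[n]) (f '' J) ≤ eVariationOn (f^[n+1]) J := by
  rw [Function.iterate_succ]
  exact eVariationOn_comp_image_le f (f^[n]) hf J hJ hJint
end

section
/- Let f:[0,1]→[0,1] be continuous with finite growth rate of variation ν(f) = limsup_n (Var f^n)^{1/n}, and let ε>0. Then the function φ(x) = Σ_{n=0}^∞ (Var f^n|_{[0,x]})/(ν(f)+ε)^n converges for all x∈[0,1] and defines a continuous strictly increasing function on [0,1]. -/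
open unitInterval Filter
open scoped ENNReal


namespace SeriesVarAux

lemma my_bot (x : I) : (0:I) ≤ x := x.2.1
lemma my_top (x : I) : x ≤ 1 := x.2.2
lemma icc_zero (z : I) : Set.Icc (0:I) z = Set.Iic z := by ext t; simp [my_bot t]

lemma decomp (g : I → I) {x y : I} (h : x ≤ y) :
    eVariationOn g (Set.Iic y) = eVariationOn g (Set.Iic x) + eVariationOn g (Set.Icc x y) := by
  have := eVariationOn.Icc_add_Icc g (my_bot x) h (Set.mem_univ x) (E := I)
  simp only [Set.univ_inter, icc_zero] at this
  exact this.symm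

lemma key_right (g : I → I) (hg : Continuous g)
    (hfin : eVariationOn g (Set.univ : Set I) ≠ ⊤) {x : I} (hx : x < 1)
    {δ : ℝ≥0∞} (hδ : 0 < δ) : ∃ y, x < y ∧ eVariationOn g (Set.Icc x y) < δ := by
  by_contra hcon
  push_neg at hcon
  set c := ⨅ (y : I) (_ : x < y), eVariationOn g (Set.Icc x y) with hc
  have hδc : δ ≤ c := le_iInf₂ hcon
  have hc0 : c ≠ 0 := fun h => (hδ.trans_le (hδc.trans h.le)).false
  have hcle : ∀ {t : I}, x < t → c ≤ eVariationOn g (Set.Icc x t) := fun ht => iInf₂_le _ ht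
  have hcfin : c ≠ ⊤ :=
    ne_top_of_le_ne_top (ne_top_of_le_ne_top hfin (eVariationOn.mono g (Set.subset_univ _))) (hcle hx)
  have hct : 0 < c.toReal := ENNReal.toReal_pos hc0 hcfin
  obtain ⟨η, hη, hball⟩ := Metric.continuousAt_iff.mp (hg.continuousAt (x := x))
    (c.toReal / 2) (by positivity)
  have hx1 : (x:ℝ) < 1 := hx
  set yr : ℝ := min ((x:ℝ) + η / 2) 1 with hyr
  have hy0 : 0 ≤ yr := le_min (add_nonneg x.2.1 (by positivity)) zero_le_one
  have hy1 : yr ≤ 1 := min_le_right _ _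
  set y : I := ⟨yr, hy0, hy1⟩ with hy
  have hxy : x < y := lt_min (by linarith) hx1
  have hyη : (y:ℝ) - (x:ℝ) < η := by
    have : yr ≤ (x:ℝ) + η/2 := min_le_left _ _
    simp only [hy]
    linarith
  have hedist : ∀ t : I, t ∈ Set.Icc x y → edist (g t) (g x) ≤ ENNReal.ofReal (c.toReal / 2) := by
    intro t ht
    have h1 : dist t x < η := by
      rw [Subtype.dist_eq, Real.dist_eq, abs_of_nonneg (by exact sub_nonneg.mpr ht.1)]
      have : (t:ℝ) ≤ y := ht.2
      linarith
    have := hball h1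
    rw [edist_dist]
    exact (ENNReal.ofReal_le_ofReal this.le)
  set V := eVariationOn g (Set.Icc x y) with hV
  have hVfin : V ≠ ⊤ := ne_top_of_le_ne_top hfin (eVariationOn.mono g (Set.subset_univ _))
  have hVpos : 0 < V := lt_of_lt_of_le (hδ.trans_le hδc) (hcle hxy)
  set c4 : ℝ≥0∞ := ENNReal.ofReal (c.toReal / 4) with hc4
  have hc4pos : 0 < c4 := ENNReal.ofReal_pos.mpr (by positivity)
  have h2 : V - c4 < V := ENNReal.sub_lt_self hVfin hVpos.ne' hc4pos.ne'
  rw [hV, eVariationOn, lt_iSup_iff] at h2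
  obtain ⟨⟨n, u, hu, us⟩, hS⟩ := h2
  replace hS : V - c4 < ∑ i ∈ Finset.range n, edist (g (u (i+1))) (g (u i)) := hS
  by_cases hex : ∃ j, j ≤ n ∧ x < u j
  · classical
    set k := Nat.find hex with hk
    obtain ⟨hkn, hxk⟩ := Nat.find_spec hex
    have hjx : ∀ j < k, u j = x := by
      intro j hj
      have := Nat.find_min hex hj
      push_neg at this
      exact le_antisymm (this (hj.le.trans hkn)) (us j).1
    set t : I := u k with htdef
    have hsplit : (∑ i ∈ Finset.range n, edist (g (u (i+1))) (g (u i)))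
        ≤ edist (g t) (g x) + eVariationOn g (Set.Icc t y) := by
      rw [Finset.range_eq_Ico, ← Finset.sum_Ico_consecutive _ (Nat.zero_le k) hkn]
      gcongr
      · calc ∑ i ∈ Finset.Ico 0 k, edist (g (u (i+1))) (g (u i))
            ≤ ∑ i ∈ Finset.Ico 0 k, (if i = k - 1 then edist (g t) (g x) else 0) := by
              apply Finset.sum_le_sum
              intro i hi
              simp only [Finset.mem_Ico] at hi
              by_cases hik : i = k - 1
              · have hk0 : k ≠ 0 := by omega
                rw [if_pos hik, hik, hjx (k-1) (by omega)]
                have : k - 1 + 1 = k := by omega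
                rw [this]
              · rw [if_neg hik, hjx i (by omega), hjx (i+1) (by omega), edist_self]
          _ ≤ edist (g t) (g x) := by
              rw [Finset.sum_ite_eq' (Finset.Ico 0 k) (k-1)]
              split <;> simp
      · apply eVariationOn.sum_le_of_monotoneOn_Icc
        · exact hu.monotoneOn _
        · intro i hi
          exact ⟨hu hi.1, (us i).2⟩
    have hWfin : eVariationOn g (Set.Icc t y) ≠ ⊤ :=
      ne_top_of_le_ne_top hfin (eVariationOn.mono g (Set.subset_univ _))
    have hdec : eVariationOn g (Set.Icc x t) + eVariationOn g (Set.Icc t y) = V := by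
      have := eVariationOn.Icc_add_Icc g (le_of_lt hxk) (us k).2 (Set.mem_univ t) (E := I)
      simpa using this
    have hcW : c + eVariationOn g (Set.Icc t y) ≤ V := by
      rw [← hdec]; exact add_le_add_left (hcle hxk) _
    have hc4c : c4 ≤ c := by
      calc c4 = ENNReal.ofReal (c.toReal / 4) := rfl
        _ ≤ ENNReal.ofReal c.toReal := ENNReal.ofReal_le_ofReal (by linarith)
        _ = c := ENNReal.ofReal_toReal hcfin
    have hVlt : V < ENNReal.ofReal (c.toReal / 2) + eVariationOn g (Set.Icc t y) + c4 := by
      rw [← ENNReal.sub_lt_iff_lt_right (ne_top_of_le_ne_top hcfin hc4c)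
        (hc4c.trans ((hcle hxy)))]
      exact lt_of_lt_of_le hS (hsplit.trans (add_le_add_left (hedist t ⟨hxk.le, (us k).2⟩) _))
    have : c + eVariationOn g (Set.Icc t y) <
        ENNReal.ofReal (c.toReal / 2) + c4 + eVariationOn g (Set.Icc t y) := by
      calc c + eVariationOn g (Set.Icc t y) ≤ V := hcW
        _ < ENNReal.ofReal (c.toReal / 2) + eVariationOn g (Set.Icc t y) + c4 := hVlt
        _ = ENNReal.ofReal (c.toReal / 2) + c4 + eVariationOn g (Set.Icc t y) := by
            rw [add_right_comm]
    rw [ENNReal.add_lt_add_iff_right hWfin] at this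
    have hlt : c < c := by
      calc c < ENNReal.ofReal (c.toReal / 2) + c4 := this
        _ = ENNReal.ofReal (c.toReal / 2 + c.toReal / 4) := by
            rw [ENNReal.ofReal_add (by positivity) (by positivity)]
        _ < ENNReal.ofReal c.toReal := ENNReal.ofReal_lt_ofReal_iff (by positivity) |>.mpr (by linarith)
        _ = c := ENNReal.ofReal_toReal hcfin
    exact hlt.false
  · push_neg at hex
    have : ∀ j ≤ n, u j = x := fun j hj => le_antisymm (hex j hj) (us j).1
    have hS0 : (∑ i ∈ Finset.range n, edist (g (u (i+1))) (g (u i))) = 0 := by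
      apply Finset.sum_eq_zero
      intro i hi
      simp only [Finset.mem_range] at hi
      rw [this i (by omega), this (i+1) (by omega), edist_self]
    rw [hS0] at hS
    exact (not_lt_of_ge zero_le) hS

lemma symm_le_symm' {a b : I} : σ a ≤ σ b ↔ b ≤ a := strictAnti_symm.le_iff_ge

lemma image_symm_Icc (a b : I) : σ '' Set.Icc a b = Set.Icc (σ b) (σ a) := by
  ext t
  constructor
  · rintro ⟨s, hs, rfl⟩
    exact ⟨symm_le_symm'.mpr hs.2, symm_le_symm'.mpr hs.1⟩
  · intro ht
    refine ⟨σ t, ⟨?_, ?_⟩, symm_symm t⟩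
    · rw [← symm_symm a]; exact symm_le_symm'.mpr ht.2
    · rw [← symm_symm b]; exact symm_le_symm'.mpr ht.1

lemma var_symm_Icc (g : I → I) (a b : I) :
    eVariationOn (g ∘ σ) (Set.Icc a b) = eVariationOn g (Set.Icc (σ b) (σ a)) := by
  rw [eVariationOn.comp_eq_of_antitoneOn g σ (strictAnti_symm.antitone.antitoneOn _),
    image_symm_Icc]

lemma var_symm_univ (g : I → I) :
    eVariationOn (g ∘ σ) (Set.univ : Set I) = eVariationOn g (Set.univ : Set I) := by
  rw [eVariationOn.comp_eq_of_antitoneOn g σ (strictAnti_symm.antitone.antitoneOn _),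
    Set.image_univ, symm_bijective.surjective.range_eq]

lemma key_left (g : I → I) (hg : Continuous g)
    (hfin : eVariationOn g (Set.univ : Set I) ≠ ⊤)
    {x : I} (hx : 0 < x)
    {δ : ℝ≥0∞} (hδ : 0 < δ) : ∃ y, y < x ∧ eVariationOn g (Set.Icc y x) < δ := by
  have hσx : σ x < 1 := by
    rw [← symm_zero]
    exact strictAnti_symm hx
  obtain ⟨z, hz1, hz2⟩ := key_right (g ∘ σ) (hg.comp continuous_symm)
    (by rw [var_symm_univ]; exact hfin) hσx hδ
  refine ⟨σ z, ?_, ?_⟩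
  · rw [← symm_symm x]; exact strictAnti_symm hz1
  · rw [← symm_symm x, ← var_symm_Icc]
    exact hz2

lemma vdiff (g : I → I) (hfin : eVariationOn g (Set.univ : Set I) ≠ ⊤) {x y : I} (h : x ≤ y) :
    (eVariationOn g (Set.Iic y)).toReal - (eVariationOn g (Set.Iic x)).toReal
      = (eVariationOn g (Set.Icc x y)).toReal := by
  have h1 : eVariationOn g (Set.Iic x) ≠ ⊤ :=
    ne_top_of_le_ne_top hfin (eVariationOn.mono g (Set.subset_univ _))
  have h2 : eVariationOn g (Set.Icc x y) ≠ ⊤ :=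
    ne_top_of_le_ne_top hfin (eVariationOn.mono g (Set.subset_univ _))
  rw [decomp g h, ENNReal.toReal_add h1 h2]
  ring

lemma var_continuous (g : I → I) (hg : Continuous g)
    (hfin : eVariationOn g (Set.univ : Set I) ≠ ⊤) :
    Continuous (fun x : I => (eVariationOn g (Set.Iic x)).toReal) := by
  set V : I → ℝ := fun x : I => (eVariationOn g (Set.Iic x)).toReal with hV
  have hVfin : ∀ s : Set I, eVariationOn g s ≠ ⊤ :=
    fun s => ne_top_of_le_ne_top hfin (eVariationOn.mono g (Set.subset_univ _))
  have hmono : Monotone V := fun a b hab => by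
    have := vdiff g hfin hab
    have h2 : 0 ≤ (eVariationOn g (Set.Icc a b)).toReal := ENNReal.toReal_nonneg
    simp only [hV]
    linarith
  rw [continuous_iff_continuousAt]
  intro x
  rw [continuousAt_iff_continuous_left_right]
  constructor
  · by_cases hx : 0 < x
    · rw [ContinuousWithinAt, Metric.tendsto_nhds]
      intro r hr
      obtain ⟨y, hy1, hy2⟩ := key_left g hg hfin hx (δ := ENNReal.ofReal r)
        (ENNReal.ofReal_pos.mpr hr)
      filter_upwards [inter_mem_nhdsWithin (Set.Iic x) (isOpen_Ioi.mem_nhds hy1 : Set.Ioi y ∈ _)]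
        with y' hy'
      obtain ⟨hy'x, hy'y⟩ := hy'
      have h1 : V x - V y' = (eVariationOn g (Set.Icc y' x)).toReal := vdiff g hfin hy'x
      rw [Real.dist_eq, abs_of_nonpos (by linarith [hmono hy'x]), neg_sub, h1]
      calc (eVariationOn g (Set.Icc y' x)).toReal
          ≤ (eVariationOn g (Set.Icc y x)).toReal :=
            ENNReal.toReal_mono (hVfin _) (eVariationOn.mono g (Set.Icc_subset_Icc_left hy'y.le))
        _ < r := (ENNReal.lt_ofReal_iff_toReal_lt (hVfin _)).mp hy2
    · have hx0 : x = 0 := le_antisymm (not_lt.mp hx) (my_bot x)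
      have : Set.Iic x = {x} := by
        ext t; simp only [Set.mem_Iic, Set.mem_singleton_iff, hx0]
        exact ⟨fun h => le_antisymm h (my_bot t), fun h => h.le⟩
      rw [this]
      exact continuousWithinAt_singleton
  · by_cases hx : x < 1
    · rw [ContinuousWithinAt, Metric.tendsto_nhds]
      intro r hr
      obtain ⟨y, hy1, hy2⟩ := key_right g hg hfin hx (δ := ENNReal.ofReal r)
        (ENNReal.ofReal_pos.mpr hr)
      filter_upwards [inter_mem_nhdsWithin (Set.Ici x) (isOpen_Iio.mem_nhds hy1 : Set.Iio y ∈ _)]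
        with y' hy'
      obtain ⟨hy'x, hy'y⟩ := hy'
      have h1 : V y' - V x = (eVariationOn g (Set.Icc x y')).toReal := vdiff g hfin hy'x
      rw [Real.dist_eq, abs_of_nonneg (by linarith [hmono hy'x]), h1]
      calc (eVariationOn g (Set.Icc x y')).toReal
          ≤ (eVariationOn g (Set.Icc x y)).toReal :=
            ENNReal.toReal_mono (hVfin _) (eVariationOn.mono g (Set.Icc_subset_Icc_right hy'y.le))
        _ < r := (ENNReal.lt_ofReal_iff_toReal_lt (hVfin _)).mp hy2
    · have hx1 : x = 1 := le_antisymm (my_top x) (not_lt.mp hx)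
      have : Set.Ici x = {x} := by
        ext t; simp only [Set.mem_Ici, Set.mem_singleton_iff, hx1]
        exact ⟨fun h => le_antisymm (my_top t) h, fun h => h.ge⟩
      rw [this]
      exact continuousWithinAt_singleton

end SeriesVarAux

open SeriesVarAux in
/-- Let `f : [0,1] → [0,1]` be continuous with finite growth rate of variation
`ν(f) = limsup_n (Var f^n)^{1/n}`, and let `ε > 0`.  Then
`φ(x) = Σ_{n=0}^∞ (Var f^n|_{[0,x]}) / (ν(f)+ε)^n` converges for all `x ∈ [0,1]`
and defines a continuous strictly increasing function on `[0,1]`. -/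
theorem series_of_variations_converges_and_is_continuous_strictMono
    (f : I → I) (hf : Continuous f)
    (hfin : ∀ n : ℕ, eVariationOn (f^[n]) (Set.univ : Set I) ≠ ⊤)
    (ν : ℝ≥0∞)
    (hν : ν = Filter.limsup
      (fun n : ℕ => eVariationOn (f^[n]) (Set.univ : Set I) ^ (1 / (n : ℝ))) Filter.atTop)
    (hνfin : ν ≠ ⊤) (ε : ℝ) (hε : 0 < ε)
    (φ : I → ℝ)
    (hφ : φ = fun x : I =>
      ∑' n : ℕ, (eVariationOn (f^[n]) (Set.Iic x)).toReal / (ν.toReal + ε) ^ n) :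
    (∀ x : I, Summable fun n : ℕ =>
        (eVariationOn (f^[n]) (Set.Iic x)).toReal / (ν.toReal + ε) ^ n) ∧
      Continuous φ ∧ StrictMono φ := by
  have hνt : 0 ≤ ν.toReal := ENNReal.toReal_nonneg
  set d : ℝ := ν.toReal + ε with hd
  have hd0 : 0 < d := by positivity
  set M : ℕ → ℝ := fun n => (eVariationOn (f^[n]) (Set.univ : Set I)).toReal / d ^ n with hM
  have hfinIic : ∀ (n : ℕ) (x : I), eVariationOn (f^[n]) (Set.Iic x) ≠ ⊤ :=
    fun n x => ne_top_of_le_ne_top (hfin n) (eVariationOn.mono _ (Set.subset_univ _))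
  -- summability of the majorant
  have hMs : Summable M := by
    set r : ℝ≥0∞ := ν + ENNReal.ofReal (ε / 2) with hr
    have hνr : ν < r := ENNReal.lt_add_right hνfin
      (by simp [ENNReal.ofReal_eq_zero]; linarith)
    have hev : ∀ᶠ n : ℕ in atTop,
        eVariationOn (f^[n]) (Set.univ : Set I) ^ (1 / (n : ℝ)) < r :=
      Filter.eventually_lt_of_limsup_lt (by rw [← hν]; exact hνr)
    obtain ⟨N, hN⟩ := hev.exists_forall_of_atTop
    set q : ℝ := (ν.toReal + ε / 2) / d with hq
    have hq0 : 0 ≤ q := by positivity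
    have hq1 : q < 1 := by
      rw [hq, div_lt_one hd0, hd]
      linarith
    have hrt : r.toReal = ν.toReal + ε / 2 := by
      rw [hr, ENNReal.toReal_add hνfin ENNReal.ofReal_ne_top, ENNReal.toReal_ofReal (by linarith)]
    have hbound : ∀ n, max N 1 ≤ n → M n ≤ q ^ n := by
      intro n hn
      have hn1 : n ≠ 0 := by omega
      have h1 : eVariationOn (f^[n]) (Set.univ : Set I) ≤ r ^ n := by
        have h2 := (hN n (le_trans (le_max_left _ _) hn)).le
        calc eVariationOn (f^[n]) (Set.univ : Set I)
            = (eVariationOn (f^[n]) (Set.univ : Set I) ^ (1 / (n:ℝ))) ^ (n:ℝ) := by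
              rw [← ENNReal.rpow_mul,
                one_div_mul_cancel (by exact_mod_cast hn1 : (n:ℝ) ≠ 0), ENNReal.rpow_one]
          _ ≤ r ^ (n:ℝ) := ENNReal.rpow_le_rpow h2 (by positivity)
          _ = r ^ n := ENNReal.rpow_natCast r n
      have hrfin : r ≠ ⊤ := by
        rw [hr]
        exact ENNReal.add_ne_top.mpr ⟨hνfin, ENNReal.ofReal_ne_top⟩
      have h3 : (eVariationOn (f^[n]) (Set.univ : Set I)).toReal ≤ (ν.toReal + ε/2) ^ n := by
        calc (eVariationOn (f^[n]) (Set.univ : Set I)).toReal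
            ≤ (r ^ n).toReal := ENNReal.toReal_mono (ENNReal.pow_ne_top hrfin) h1
          _ = r.toReal ^ n := by rw [ENNReal.toReal_pow]
          _ = (ν.toReal + ε/2) ^ n := by rw [hrt]
      rw [hM, hq, div_pow]
      exact div_le_div_of_nonneg_right h3 (by positivity)
    have hMnn : ∀ n, 0 ≤ M n := fun n => by
      apply div_nonneg ENNReal.toReal_nonneg (by positivity)
    set K := max N 1 with hK
    rw [← summable_nat_add_iff K]
    apply Summable.of_nonneg_of_le (fun n => hMnn _) (fun n => hbound (n + K) (by omega))
    exact ((summable_geometric_of_lt_one hq0 hq1).comp_injective (add_left_injective K)).congr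
      (fun n => rfl)
  -- pointwise bound
  have hterm_le : ∀ (x : I) (n : ℕ),
      (eVariationOn (f^[n]) (Set.Iic x)).toReal / d ^ n ≤ M n := by
    intro x n
    apply div_le_div_of_nonneg_right ?_ (by positivity) |>.trans (le_refl _)
    exact ENNReal.toReal_mono (hfin n) (eVariationOn.mono _ (Set.subset_univ _))
  have hterm_nn : ∀ (x : I) (n : ℕ),
      0 ≤ (eVariationOn (f^[n]) (Set.Iic x)).toReal / d ^ n := by
    intro x n; positivity
  have hsumm : ∀ x : I, Summable fun n : ℕ =>
      (eVariationOn (f^[n]) (Set.Iic x)).toReal / d ^ n := by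
    intro x
    exact Summable.of_nonneg_of_le (hterm_nn x) (hterm_le x) hMs
  refine ⟨hsumm, ?_, ?_⟩
  · -- continuity
    rw [hφ]
    apply continuous_tsum ?_ hMs ?_
    · intro n
      exact (var_continuous (f^[n]) (hf.iterate n) (hfin n)).div_const _
    · intro n x
      rw [Real.norm_eq_abs, abs_of_nonneg (hterm_nn x n)]
      exact hterm_le x n
  · -- strict mono
    intro x y hxy
    rw [hφ]
    apply Summable.tsum_lt_tsum (i := 0) ?_ ?_ (hsumm x) (hsumm y)
    · intro n
      apply div_le_div_of_nonneg_right ?_ (by positivity)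
      exact ENNReal.toReal_mono (hfinIic n y) (eVariationOn.mono _ (Set.Iic_subset_Iic.mpr hxy.le))
    · simp only [pow_zero, div_one]
      have hdec := vdiff (f^[0]) (hfin 0) hxy.le
      have hpos : 0 < (eVariationOn (f^[0]) (Set.Icc x y)).toReal := by
        have h1 : edist (f^[0] x) (f^[0] y) ≤ eVariationOn (f^[0]) (Set.Icc x y) :=
          eVariationOn.edist_le _ ⟨le_rfl, hxy.le⟩ ⟨hxy.le, le_rfl⟩
        have h2 : dist x y ≤ (eVariationOn (f^[0]) (Set.Icc x y)).toReal := by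
          have := ENNReal.toReal_mono
            (ne_top_of_le_ne_top (hfin 0) (eVariationOn.mono _ (Set.subset_univ _))) h1
          simpa [Function.iterate_zero, dist_edist] using this
        have h3 : 0 < dist x y := dist_pos.mpr hxy.ne
        linarith
      linarith
end

section
/- Let f ∈ 𝒞ℳℳ with partition set P. For partition intervals I_0,…,I_n ∈ ℬ(P) with [I_0⋯I_n] := I_0 ∩ f^{-1}I_1 ∩ ⋯ ∩ f^{-n}I_n nonempty, the restriction f^n|_{[I_0⋯I_n]} : [I_0⋯I_n] → I_n is a homeomorphism. -/
open unitInterval Filter Set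

instance : Fact ((0:ℝ) ≤ 1) := ⟨zero_le_one⟩

section Aux

variable {f : I → I} {P : Set I}

/-- `f` is not constant on any nonempty open set, by topological mixing. -/
lemma cim_not_const
    (hmix : ∀ U V : Set I, IsOpen U → IsOpen V → U.Nonempty → V.Nonempty →
      ∃ n0 : ℕ, ∀ n ≥ n0, (f^[n] '' U ∩ V).Nonempty)
    {U : Set I} (hU : IsOpen U) (hUne : U.Nonempty) {p : I}
    (hconst : ∀ z ∈ U, f z = p) : False := by
  set V1 : Set I := {x : I | (x : ℝ) < 1/2} with hV1def
  set V2 : Set I := {x : I | (1:ℝ)/2 < (x : ℝ)} with hV2def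
  have hV1 : IsOpen V1 := isOpen_lt continuous_subtype_val continuous_const
  have hV2 : IsOpen V2 := isOpen_lt continuous_const continuous_subtype_val
  have hV1ne : V1.Nonempty := ⟨0, by norm_num [hV1def]⟩
  have hV2ne : V2.Nonempty := ⟨1, by norm_num [hV2def]⟩
  obtain ⟨n1, h1'⟩ := hmix U V1 hU hV1 hUne hV1ne
  obtain ⟨n2, h2'⟩ := hmix U V2 hU hV2 hUne hV2ne
  set m := max n1 n2 with hm
  have key : ∀ z ∈ U, f^[m+1] z = f^[m] p := by
    intro z hz
    rw [Function.iterate_succ_apply, hconst z hz]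
  obtain ⟨q1, hq1U, hq1V⟩ := h1' (m+1) (le_trans (le_max_left _ _) (Nat.le_succ m))
  obtain ⟨q2, hq2U, hq2V⟩ := h2' (m+1) (le_trans (le_max_right _ _) (Nat.le_succ m))
  obtain ⟨z1, hz1, hfz1⟩ := hq1U
  obtain ⟨z2, hz2, hfz2⟩ := hq2U
  rw [key z1 hz1] at hfz1
  rw [key z2 hz2] at hfz2
  rw [← hfz1] at hq1V
  rw [← hfz2] at hq2V
  have h1'' : ((f^[m] p : I) : ℝ) < 1/2 := hq1V
  have h2'' : (1:ℝ)/2 < ((f^[m] p : I) : ℝ) := hq2V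
  linarith

lemma cim_pos (h0 : (0 : I) ∈ P) {x : I} (hx : x ∈ Pᶜ) : 0 < x := by
  have hne : x ≠ 0 := fun h => hx (h ▸ h0)
  exact hne.symm.lt_of_le x.2.1

lemma cim_lt_one (h1 : (1 : I) ∈ P) {x : I} (hx : x ∈ Pᶜ) : x < 1 :=
  lt_of_le_of_ne x.2.2 (fun h => hx (h ▸ h1))

/-- Connected components of `Pᶜ` are open. -/
lemma cim_comp_open (hPclosed : IsClosed P) (h0 : (0 : I) ∈ P) (h1 : (1 : I) ∈ P)
    {x : I} : IsOpen (connectedComponentIn Pᶜ x) := by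
  rw [isOpen_iff_mem_nhds]
  intro w hw
  have hwP : w ∈ Pᶜ := connectedComponentIn_subset _ _ hw
  have hw0 : 0 < w := cim_pos h0 hwP
  have hw1 : w < 1 := cim_lt_one h1 hwP
  have hnb : Pᶜ ∈ nhds w := hPclosed.isOpen_compl.mem_nhds hwP
  rw [mem_nhds_iff_exists_Ioo_subset' ⟨0, hw0⟩ ⟨1, hw1⟩] at hnb
  obtain ⟨l, u, hwlu, hsub⟩ := hnb
  have hIoo : Ioo l u ⊆ connectedComponentIn Pᶜ w :=
    isPreconnected_Ioo.subset_connectedComponentIn hwlu hsub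
  rw [connectedComponentIn_eq hw]
  exact Filter.mem_of_superset (Ioo_mem_nhds hwlu.1 hwlu.2) hIoo

lemma cim_exists_gt (hPclosed : IsClosed P) (h0 : (0 : I) ∈ P) (h1 : (1 : I) ∈ P)
    {x w : I} (hw : w ∈ connectedComponentIn Pᶜ x) :
    ∃ w' ∈ connectedComponentIn Pᶜ x, w < w' := by
  have hJo := cim_comp_open hPclosed h0 h1 (x := x)
  have hw1 : w < 1 := cim_lt_one h1 (connectedComponentIn_subset _ _ hw)
  haveI : (nhdsWithin w (Ioi w)).NeBot := nhdsGT_neBot_of_exists_gt ⟨1, hw1⟩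
  have hmem : connectedComponentIn Pᶜ x ∩ Ioi w ∈ nhdsWithin w (Ioi w) :=
    Filter.inter_mem (mem_nhdsWithin_of_mem_nhds (hJo.mem_nhds hw)) self_mem_nhdsWithin
  obtain ⟨w', hw'⟩ := Filter.nonempty_of_mem hmem
  exact ⟨w', hw'.1, hw'.2⟩

lemma cim_exists_lt (hPclosed : IsClosed P) (h0 : (0 : I) ∈ P) (h1 : (1 : I) ∈ P)
    {x w : I} (hw : w ∈ connectedComponentIn Pᶜ x) :
    ∃ w' ∈ connectedComponentIn Pᶜ x, w' < w := by
  have hJo := cim_comp_open hPclosed h0 h1 (x := x)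
  have hw0 : 0 < w := cim_pos h0 (connectedComponentIn_subset _ _ hw)
  haveI : (nhdsWithin w (Iio w)).NeBot := nhdsWithin_Iio_self_neBot' ⟨0, hw0⟩
  have hmem : connectedComponentIn Pᶜ x ∩ Iio w ∈ nhdsWithin w (Iio w) :=
    Filter.inter_mem (mem_nhdsWithin_of_mem_nhds (hJo.mem_nhds hw)) self_mem_nhdsWithin
  obtain ⟨w', hw'⟩ := Filter.nonempty_of_mem hmem
  exact ⟨w', hw'.1, hw'.2⟩

/-- `f` is strictly monotone or strictly antitone on each component of `Pᶜ`. -/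
lemma cim_strict
    (hmix : ∀ U V : Set I, IsOpen U → IsOpen V → U.Nonempty → V.Nonempty →
      ∃ n0 : ℕ, ∀ n ≥ n0, (f^[n] '' U ∩ V).Nonempty)
    (hmono : ∀ x ∈ Pᶜ, MonotoneOn f (connectedComponentIn Pᶜ x) ∨
      AntitoneOn f (connectedComponentIn Pᶜ x))
    {x : I} (hx : x ∈ Pᶜ) :
    StrictMonoOn f (connectedComponentIn Pᶜ x) ∨
      StrictAntiOn f (connectedComponentIn Pᶜ x) := by
  set J := connectedComponentIn Pᶜ x with hJ
  have hOC : J.OrdConnected := isPreconnected_connectedComponentIn.ordConnected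
  have key : ∀ a ∈ J, ∀ b ∈ J, a < b → f a ≠ f b := by
    intro a ha b hb hab heq
    refine cim_not_const hmix (isOpen_Ioo (a := a) (b := b)) (nonempty_Ioo.mpr hab)
      (p := f a) ?_
    intro z hz
    have hzJ : z ∈ J := hOC.out ha hb ⟨hz.1.le, hz.2.le⟩
    rcases hmono x hx with hm | hm
    · exact le_antisymm ((hm hzJ hb hz.2.le).trans heq.ge) (hm ha hzJ hz.1.le)
    · exact le_antisymm (hm ha hzJ hz.1.le) (heq.le.trans (hm hzJ hb hz.2.le))
  rcases hmono x hx with hm | hm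
  · exact Or.inl (fun a ha b hb hab => (hm ha hb hab.le).lt_of_ne (key a ha b hb hab))
  · exact Or.inr (fun a ha b hb hab =>
      (hm ha hb hab.le).lt_of_ne (fun h => key a ha b hb hab h.symm))

lemma cim_mem_closure (hPclosed : IsClosed P) (h0 : (0 : I) ∈ P) (h1 : (1 : I) ∈ P)
    {x w : I} (hw : w ∈ closure (connectedComponentIn Pᶜ x)) :
    w ∈ connectedComponentIn Pᶜ x ∨ w ∈ P := by
  by_cases hwP : w ∈ P
  · exact Or.inr hwP
  · left
    have hwc : w ∈ Pᶜ := hwP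
    have hCo := cim_comp_open hPclosed h0 h1 (x := w)
    obtain ⟨u, huC, huJ⟩ := mem_closure_iff.mp hw _ hCo (mem_connectedComponentIn hwc)
    have h1' : connectedComponentIn Pᶜ w = connectedComponentIn Pᶜ u :=
      connectedComponentIn_eq huC
    have h2' : connectedComponentIn Pᶜ x = connectedComponentIn Pᶜ u :=
      connectedComponentIn_eq huJ
    rw [h2', ← h1']
    exact mem_connectedComponentIn hwc

/-- The Markov property: if `f` of a component meets a component `K`, it covers `K`. -/
lemma cim_markov (hf : Continuous f)
    (hmix : ∀ U V : Set I, IsOpen U → IsOpen V → U.Nonempty → V.Nonempty →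
      ∃ n0 : ℕ, ∀ n ≥ n0, (f^[n] '' U ∩ V).Nonempty)
    (hPclosed : IsClosed P) (h0 : (0 : I) ∈ P) (h1 : (1 : I) ∈ P)
    (hPinv : f '' P ⊆ P)
    (hmono : ∀ x ∈ Pᶜ, MonotoneOn f (connectedComponentIn Pᶜ x) ∨
      AntitoneOn f (connectedComponentIn Pᶜ x))
    {xJ xK : I} (hxJ : xJ ∈ Pᶜ)
    {z y : I} (hzK : z ∈ connectedComponentIn Pᶜ xK)
    (hzJ : z ∈ f '' connectedComponentIn Pᶜ xJ)
    (hyK : y ∈ connectedComponentIn Pᶜ xK) :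
    y ∈ f '' connectedComponentIn Pᶜ xJ := by
  set J := connectedComponentIn Pᶜ xJ with hJdef
  set K := connectedComponentIn Pᶜ xK with hKdef
  set T := f '' closure J with hTdef
  have hTcpt : IsCompact T := (isClosed_closure.isCompact).image hf
  have hTpc : IsPreconnected T :=
    (isPreconnected_connectedComponentIn.closure).image f hf.continuousOn
  have hTOC : T.OrdConnected := hTpc.ordConnected
  have hKOC : K.OrdConnected := isPreconnected_connectedComponentIn.ordConnected
  have hJsub : f '' J ⊆ T := image_mono subset_closure
  have hTne : T.Nonempty := ⟨z, hJsub hzJ⟩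
  -- no extrema of `f` on `closure J` inside `J`
  have hnotext : ∀ w ∈ J, (∃ a ∈ J, f w < f a) ∧ (∃ a ∈ J, f a < f w) := by
    intro w hwJ
    obtain ⟨wg, hwg, hlt1⟩ := cim_exists_gt hPclosed h0 h1 hwJ
    obtain ⟨wl, hwl, hlt2⟩ := cim_exists_lt hPclosed h0 h1 hwJ
    rcases cim_strict hmix hmono hxJ with hm | hm
    · exact ⟨⟨wg, hwg, hm hwJ hwg hlt1⟩, ⟨wl, hwl, hm hwl hwJ hlt2⟩⟩
    · exact ⟨⟨wl, hwl, hm hwl hwJ hlt2⟩, ⟨wg, hwg, hm hwJ hwg hlt1⟩⟩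
  have hminP : ∀ c, IsLeast T c → c ∈ P := by
    rintro c ⟨⟨w, hw, hwc⟩, hlb⟩
    rcases cim_mem_closure hPclosed h0 h1 hw with hwJ | hwP
    · exfalso
      obtain ⟨a, haJ, hfa⟩ := (hnotext w hwJ).2
      have : c ≤ f a := hlb ⟨a, subset_closure haJ, rfl⟩
      rw [hwc] at hfa
      exact absurd this hfa.not_ge
    · exact hPinv ⟨w, hwP, hwc⟩
  have hmaxP : ∀ c, IsGreatest T c → c ∈ P := by
    rintro c ⟨⟨w, hw, hwc⟩, hub⟩
    rcases cim_mem_closure hPclosed h0 h1 hw with hwJ | hwP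
    · exfalso
      obtain ⟨a, haJ, hfa⟩ := (hnotext w hwJ).1
      have : f a ≤ c := hub ⟨a, subset_closure haJ, rfl⟩
      rw [hwc] at hfa
      exact absurd this hfa.not_ge
    · exact hPinv ⟨w, hwP, hwc⟩
  by_contra hyJ
  have hyT : y ∉ T := by
    rintro ⟨w, hw, hwy⟩
    rcases cim_mem_closure hPclosed h0 h1 hw with hwJ | hwP
    · exact hyJ ⟨w, hwJ, hwy⟩
    · exact (connectedComponentIn_subset Pᶜ xK hyK) (hPinv ⟨w, hwP, hwy⟩)
  have hzT : z ∈ T := hJsub hzJ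
  rcases lt_trichotomy y z with hlt | heq | hlt
  · obtain ⟨c, hc⟩ := hTcpt.exists_isLeast hTne
    have hcz : c ≤ z := hc.2 hzT
    have hyc : y < c := by
      by_contra h
      exact hyT (hTOC.out hc.1 hzT ⟨not_lt.mp h, hlt.le⟩)
    have hcK : c ∈ K := hKOC.out hyK hzK ⟨hyc.le, hcz⟩
    exact (connectedComponentIn_subset Pᶜ xK hcK) (hminP c hc)
  · exact hyJ (heq ▸ hzJ)
  · obtain ⟨c, hc⟩ := hTcpt.exists_isGreatest hTne
    have hcz : z ≤ c := hc.2 hzT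
    have hyc : c < y := by
      by_contra h
      exact hyT (hTOC.out hzT hc.1 ⟨hlt.le, not_lt.mp h⟩)
    have hcK : c ∈ K := hKOC.out hzK hyK ⟨hcz, hyc.le⟩
    exact (connectedComponentIn_subset Pᶜ xK hcK) (hmaxP c hc)

/-- Main induction: the cylinder is order-connected and `f^[n]` restricts to a
homeomorphism from the cylinder onto the last partition interval. -/
theorem cim_aux (f : I → I) (hf : Continuous f)
    (hmix : ∀ U V : Set I, IsOpen U → IsOpen V → U.Nonempty → V.Nonempty →
      ∃ n0 : ℕ, ∀ n ≥ n0, (f^[n] '' U ∩ V).Nonempty)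
    (P : Set I) (hPclosed : IsClosed P)
    (h0 : (0 : I) ∈ P) (h1 : (1 : I) ∈ P) (hPinv : f '' P ⊆ P)
    (hmono : ∀ x ∈ Pᶜ, MonotoneOn f (connectedComponentIn Pᶜ x) ∨
      AntitoneOn f (connectedComponentIn Pᶜ x)) :
    ∀ n : ℕ, ∀ Is : Fin (n + 1) → Set I,
      (∀ i, ∃ x ∈ Pᶜ, Is i = connectedComponentIn Pᶜ x) →
      ∀ cyl : Set I, cyl = ⋂ i : Fin (n + 1), f^[(i : ℕ)] ⁻¹' Is i → cyl.Nonempty →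
      cyl.OrdConnected ∧
        ∃ e : cyl ≃ₜ Is (Fin.last n), ∀ x : cyl, (e x : I) = f^[n] (x : I) := by
  intro n
  induction n with
  | zero =>
    intro Is hIs cyl hcyl hne
    have hcylIs : cyl = Is 0 := by
      rw [hcyl]; ext w; simp [Set.mem_iInter, Fin.forall_fin_one]
    obtain ⟨xJ, hxJ, hJeq⟩ := hIs 0
    have h00 : Is (Fin.last 0) = Is 0 := congrArg Is (Fin.ext (by simp))
    constructor
    · rw [hcylIs, hJeq]
      exact isPreconnected_connectedComponentIn.ordConnected
    · refine ⟨Homeomorph.setCongr (hcylIs.trans h00.symm), fun x => ?_⟩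
      simp [Homeomorph.setCongr]
  | succ n ih =>
    intro Is hIs cyl hcyl hne
    set Is' : Fin (n + 1) → Set I := fun i => Is i.succ with hIs'def
    set cyl' : Set I := ⋂ i : Fin (n + 1), f^[(i : ℕ)] ⁻¹' Is' i with hcyl'def
    have hsplit : cyl = Is 0 ∩ f ⁻¹' cyl' := by
      rw [hcyl]
      ext w
      constructor
      · intro h
        rw [mem_iInter] at h
        refine ⟨by simpa using h 0, ?_⟩
        rw [mem_preimage, hcyl'def, mem_iInter]
        intro i
        have hh := h i.succ
        rw [mem_preimage, Fin.val_succ, Function.iterate_succ_apply] at hh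
        rw [mem_preimage]
        exact hh
      · rintro ⟨hw0, hw'⟩
        rw [mem_preimage, hcyl'def, mem_iInter] at hw'
        rw [mem_iInter]
        intro i
        rw [mem_preimage]
        refine Fin.cases ?_ (fun j => ?_) i
        · simpa using hw0
        · have hh := hw' j
          rw [mem_preimage] at hh
          rw [Fin.val_succ, Function.iterate_succ_apply]
          exact hh
    obtain ⟨x0, hx0⟩ := hne
    have hx0' : x0 ∈ Is 0 ∩ f ⁻¹' cyl' := by rw [← hsplit]; exact hx0
    obtain ⟨hOC', e', he'⟩ :=
      ih Is' (fun i => hIs i.succ) cyl' rfl ⟨f x0, hx0'.2⟩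
    obtain ⟨xJ, hxJ, hJeq⟩ := hIs 0
    obtain ⟨xK, hxK, hKeq⟩ := hIs (0 : Fin (n + 1)).succ
    have hsub' : cyl' ⊆ connectedComponentIn Pᶜ xK := by
      intro w hw
      rw [hcyl'def, mem_iInter] at hw
      have hh := hw 0
      rw [← hKeq]
      exact hh
    -- surjectivity of `f : cyl → cyl'`
    have hsurj : ∀ y ∈ cyl', ∃ w ∈ cyl, f w = y := by
      intro y hy
      have hzK : f x0 ∈ connectedComponentIn Pᶜ xK := hsub' hx0'.2
      have hzJ : f x0 ∈ f '' connectedComponentIn Pᶜ xJ := by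
        refine ⟨x0, ?_, rfl⟩
        rw [← hJeq]; exact hx0'.1
      have hyK : y ∈ connectedComponentIn Pᶜ xK := hsub' hy
      obtain ⟨w, hwJ, hwy⟩ := cim_markov hf hmix hPclosed h0 h1 hPinv hmono hxJ hzK hzJ hyK
      refine ⟨w, ?_, hwy⟩
      rw [hsplit]
      refine ⟨by rw [hJeq]; exact hwJ, ?_⟩
      rw [mem_preimage, hwy]
      exact hy
    have hJOC : (connectedComponentIn Pᶜ xJ).OrdConnected :=
      isPreconnected_connectedComponentIn.ordConnected
    have hcOC : cyl.OrdConnected := by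
      rw [hsplit]
      constructor
      rintro a ⟨haJ, haC⟩ b ⟨hbJ, hbC⟩ w hw
      rw [hJeq] at haJ hbJ
      have hwJ : w ∈ connectedComponentIn Pᶜ xJ := hJOC.out haJ hbJ hw
      rw [mem_preimage] at haC hbC
      refine ⟨by rw [hJeq]; exact hwJ, ?_⟩
      rw [mem_preimage]
      rcases hmono xJ hxJ with hm | hm
      · exact hOC'.out haC hbC ⟨hm haJ hwJ hw.1, hm hwJ hbJ hw.2⟩
      · exact hOC'.out hbC haC ⟨hm hwJ hbJ hw.2, hm haJ hwJ hw.1⟩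
    -- the step homeomorphism
    have hmem : ∀ w : I, w ∈ cyl → f w ∈ cyl' := by
      intro w hw; rw [hsplit] at hw; exact hw.2
    have hcylJ : ∀ w : I, w ∈ cyl → w ∈ connectedComponentIn Pᶜ xJ := by
      intro w hw; rw [hsplit] at hw
      have := hw.1; rwa [hJeq] at this
    set g : ↥cyl → ↥cyl' := fun w => ⟨f w, hmem w w.2⟩ with hgdef
    have hgsurj : Function.Surjective g := by
      rintro ⟨y, hy⟩
      obtain ⟨w, hw, hwy⟩ := hsurj y hy
      exact ⟨⟨w, hw⟩, Subtype.ext hwy⟩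
    haveI : cyl.OrdConnected := hcOC
    haveI : cyl'.OrdConnected := hOC'
    obtain ⟨e0, he0⟩ : ∃ e0 : ↥cyl ≃ₜ ↥cyl', ∀ w : cyl, ((e0 w : I)) = f w := by
      rcases cim_strict hmix hmono hxJ with hm | hm
      · have hgmono : StrictMono g := by
          intro a b hab
          exact Subtype.mk_lt_mk.mpr
            (hm (hcylJ a a.2) (hcylJ b b.2) (Subtype.coe_lt_coe.mpr hab))
        exact ⟨(StrictMono.orderIsoOfSurjective g hgmono hgsurj).toHomeomorph,
          fun w => rfl⟩
      · set g' : ↥cyl → (↥cyl')ᵒᵈ := fun w => OrderDual.toDual (g w) with hg'def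
        have hg'mono : StrictMono g' := by
          intro a b hab
          exact OrderDual.toDual_lt_toDual.mpr
            (Subtype.mk_lt_mk.mpr
              (hm (hcylJ a a.2) (hcylJ b b.2) (Subtype.coe_lt_coe.mpr hab)))
        have hg'surj : Function.Surjective g' := by
          intro y
          obtain ⟨w, hw⟩ := hgsurj (OrderDual.ofDual y)
          exact ⟨w, congrArg OrderDual.toDual hw⟩
        exact ⟨(StrictMono.orderIsoOfSurjective g' hg'mono hg'surj).toHomeomorph.trans
          ⟨OrderDual.ofDual, continuous_ofDual, continuous_toDual⟩, fun w => rfl⟩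
    have hlast : Is' (Fin.last n) = Is (Fin.last (n + 1)) := congrArg Is (Fin.succ_last n)
    refine ⟨hcOC, e0.trans (e'.trans (Homeomorph.setCongr hlast)), fun w => ?_⟩
    calc ((e0.trans (e'.trans (Homeomorph.setCongr hlast))) w : I)
        = (e' (e0 w) : I) := rfl
      _ = f^[n] ((e0 w : I)) := he' _
      _ = f^[n] (f w) := by rw [he0]
      _ = f^[n + 1] (w : I) := (Function.iterate_succ_apply f n (w : I)).symm

end Aux

/-- Let `f ∈ 𝒞ℳℳ` with partition set `P`.  For partition intervals
`I_0, …, I_n ∈ ℬ(P)` with `[I_0⋯I_n] := I_0 ∩ f^{-1}I_1 ∩ ⋯ ∩ f^{-n}I_n` nonempty,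
the restriction `f^n|_{[I_0⋯I_n]} : [I_0⋯I_n] → I_n` is a homeomorphism. -/
theorem cylinder_iterate_homeomorphism
    (f : I → I) (hf : Continuous f)
    (hmix : ∀ U V : Set I, IsOpen U → IsOpen V → U.Nonempty → V.Nonempty →
      ∃ n0 : ℕ, ∀ n ≥ n0, (f^[n] '' U ∩ V).Nonempty)
    (P : Set I) (hPclosed : IsClosed P) (hPcount : P.Countable)
    (h0 : (0 : I) ∈ P) (h1 : (1 : I) ∈ P) (hPinv : f '' P ⊆ P)
    (hmono : ∀ x ∈ Pᶜ, MonotoneOn f (connectedComponentIn Pᶜ x) ∨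
      AntitoneOn f (connectedComponentIn Pᶜ x))
    (n : ℕ) (Is : Fin (n + 1) → Set I)
    (hIs : ∀ i, ∃ x ∈ Pᶜ, Is i = connectedComponentIn Pᶜ x)
    (cyl : Set I) (hcyl : cyl = ⋂ i : Fin (n + 1), f^[(i : ℕ)] ⁻¹' Is i)
    (hne : cyl.Nonempty) :
    ∃ e : cyl ≃ₜ Is (Fin.last n), ∀ x : cyl, (e x : I) = f^[n] (x : I) := by
  exact (cim_aux f hf hmix P hPclosed h0 h1 hPinv hmono n Is hIs cyl hcyl hne).2
end

section
/- Let f ∈ 𝒞ℳℳ with partition set P. Then the set of accumulation points of P is forward invariant: f(Acc P) ⊂ Acc P. -/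
open unitInterval Filter Set Topology

/-- `val '' Icc a b = Icc a b` in `ℝ`. -/
lemma I_val_image_Icc (a b : I) :
    Subtype.val '' (Icc a b) = Icc (a : ℝ) (b : ℝ) := by
  ext r
  constructor
  · rintro ⟨w, ⟨h1, h2⟩, rfl⟩
    exact ⟨Subtype.coe_le_coe.mpr h1, Subtype.coe_le_coe.mpr h2⟩
  · rintro ⟨h1, h2⟩
    have hrI : r ∈ I := ⟨a.2.1.trans h1, h2.trans b.2.2⟩
    exact ⟨⟨r, hrI⟩, ⟨h1, h2⟩, rfl⟩

lemma isPreconnected_Icc_I (a b : I) : IsPreconnected (Icc a b) := by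
  apply Topology.IsInducing.subtypeVal.isPreconnected_image.mp
  rw [I_val_image_Icc]
  exact isPreconnected_Icc

/-- If `b` is the greatest element of the closure of the connected component of
`z` in `Pᶜ` and `b < 1`, then `b ∈ P`. -/
lemma greatest_boundary_mem (P : Set I) (hP : IsClosed P) {z : I} (hz : z ∉ P) {b : I}
    (hb : IsGreatest (closure (connectedComponentIn Pᶜ z)) b) (hb1 : b < 1) : b ∈ P := by
  set C := connectedComponentIn Pᶜ z with hC
  by_contra hbP
  have hzC : z ∈ C := mem_connectedComponentIn hz
  have hCsub : C ⊆ Pᶜ := connectedComponentIn_subset _ _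
  have hbC : b ∈ C := by
    have hpre : IsPreconnected (C ∪ {b}) :=
      isPreconnected_connectedComponentIn.subset_closure subset_union_left
        (union_subset subset_closure (by simpa using hb.1))
    exact hpre.subset_connectedComponentIn (Or.inl hzC)
      (union_subset hCsub (by simpa using hbP)) (Or.inr rfl)
  obtain ⟨ε, hε, hball⟩ := Metric.isOpen_iff.mp hP.isOpen_compl b hbP
  have hb1' : (b : ℝ) < 1 := hb1
  have hrI : min ((b : ℝ) + ε / 2) 1 ∈ I :=
    ⟨le_min (by linarith [b.2.1]) zero_le_one, min_le_right _ _⟩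
  set w : I := ⟨min ((b : ℝ) + ε / 2) 1, hrI⟩ with hw
  have hbw : b < w := by
    rw [← Subtype.coe_lt_coe]
    exact lt_min (by linarith) hb1'
  have hIcc : Icc b w ⊆ Pᶜ := by
    intro y ⟨hy1, hy2⟩
    apply hball
    rw [Metric.mem_ball, Subtype.dist_eq, Real.dist_eq, abs_of_nonneg (by
      simpa using Subtype.coe_le_coe.mpr hy1)]
    have : (y : ℝ) ≤ min ((b : ℝ) + ε / 2) 1 := Subtype.coe_le_coe.mpr hy2
    have := this.trans (min_le_left _ _)
    linarith
  have hpre2 : IsPreconnected (C ∪ Icc b w) :=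
    IsPreconnected.union b hbC ⟨le_rfl, hbw.le⟩
      isPreconnected_connectedComponentIn (isPreconnected_Icc_I b w)
  have hsub : C ∪ Icc b w ⊆ C :=
    hpre2.subset_connectedComponentIn (Or.inl hzC) (union_subset hCsub hIcc)
  have hwC : w ∈ C := hsub (Or.inr ⟨hbw.le, le_rfl⟩)
  exact absurd (hb.2 (subset_closure hwC)) (not_le.mpr hbw)

/-- If `a` is the least element of the closure of the connected component of
`z` in `Pᶜ` and `0 < a`, then `a ∈ P`. -/
lemma least_boundary_mem (P : Set I) (hP : IsClosed P) {z : I} (hz : z ∉ P) {a : I}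
    (ha : IsLeast (closure (connectedComponentIn Pᶜ z)) a) (ha0 : 0 < a) : a ∈ P := by
  set C := connectedComponentIn Pᶜ z with hC
  by_contra haP
  have hzC : z ∈ C := mem_connectedComponentIn hz
  have hCsub : C ⊆ Pᶜ := connectedComponentIn_subset _ _
  have haC : a ∈ C := by
    have hpre : IsPreconnected (C ∪ {a}) :=
      isPreconnected_connectedComponentIn.subset_closure subset_union_left
        (union_subset subset_closure (by simpa using ha.1))
    exact hpre.subset_connectedComponentIn (Or.inl hzC)
      (union_subset hCsub (by simpa using haP)) (Or.inr rfl)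
  obtain ⟨ε, hε, hball⟩ := Metric.isOpen_iff.mp hP.isOpen_compl a haP
  have ha0' : (0 : ℝ) < a := ha0
  have hrI : max ((a : ℝ) - ε / 2) 0 ∈ I :=
    ⟨le_max_right _ _, max_le (by linarith [a.2.2]) zero_le_one⟩
  set w : I := ⟨max ((a : ℝ) - ε / 2) 0, hrI⟩ with hw
  have hwa : w < a := by
    rw [← Subtype.coe_lt_coe]
    exact max_lt (by linarith) ha0'
  have hIcc : Icc w a ⊆ Pᶜ := by
    intro y ⟨hy1, hy2⟩
    apply hball
    rw [Metric.mem_ball, Subtype.dist_eq, Real.dist_eq, abs_of_nonpos (by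
      simpa using Subtype.coe_le_coe.mpr hy2)]
    have : max ((a : ℝ) - ε / 2) 0 ≤ (y : ℝ) := Subtype.coe_le_coe.mpr hy1
    have := (le_max_left _ _).trans this
    linarith
  have hpre2 : IsPreconnected (C ∪ Icc w a) :=
    IsPreconnected.union a haC ⟨hwa.le, le_rfl⟩
      isPreconnected_connectedComponentIn (isPreconnected_Icc_I w a)
  have hsub : C ∪ Icc w a ⊆ C :=
    hpre2.subset_connectedComponentIn (Or.inl hzC) (union_subset hCsub hIcc)
  have hwC : w ∈ C := hsub (Or.inr ⟨le_rfl, hwa.le⟩)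
  exact absurd (ha.2 (subset_closure hwC)) (not_le.mpr hwa)

/-- Limit of a monotone map at the supremum of a set dominates the values. -/
lemma monotoneOn_le_closure_ub {β : Type*} [TopologicalSpace β] [LinearOrder β]
    [OrderClosedTopology β] {f : I → β} {C : Set I} (hm : MonotoneOn f C) {z b : I}
    (hfb : ContinuousAt f b) (hz : z ∈ C) (hb : b ∈ closure C)
    (hub : ∀ c ∈ C, c ≤ b) : f z ≤ f b := by
  rcases eq_or_lt_of_le (hub z hz) with rfl | hlt
  · exact le_rfl
  · obtain ⟨u, hu, hulim⟩ := mem_closure_iff_seq_limit.mp hb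
    have h2 : Tendsto (fun n => f (u n)) atTop (𝓝 (f b)) := hfb.tendsto.comp hulim
    have hval : Tendsto (fun n => ((u n : I) : ℝ)) atTop (𝓝 ((b : I) : ℝ)) :=
      (continuous_subtype_val.tendsto _).comp hulim
    have hev : ∀ᶠ n in atTop, (z : ℝ) < ((u n : I) : ℝ) :=
      hval.eventually (eventually_gt_nhds (Subtype.coe_lt_coe.mpr hlt))
    have hev2 : ∀ᶠ n in atTop, f z ≤ f (u n) :=
      hev.mono fun n hn => hm hz (hu n) (Subtype.coe_le_coe.mp hn.le)
    exact ge_of_tendsto h2 hev2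

/-- Limit of a monotone map at the infimum of a set is dominated by the values. -/
lemma monotoneOn_ge_closure_lb {β : Type*} [TopologicalSpace β] [LinearOrder β]
    [OrderClosedTopology β] {f : I → β} {C : Set I} (hm : MonotoneOn f C) {z a : I}
    (hfa : ContinuousAt f a) (hz : z ∈ C) (ha : a ∈ closure C)
    (hlb : ∀ c ∈ C, a ≤ c) : f a ≤ f z := by
  rcases eq_or_lt_of_le (hlb z hz) with rfl | hlt
  · exact le_rfl
  · obtain ⟨u, hu, hulim⟩ := mem_closure_iff_seq_limit.mp ha
    have h2 : Tendsto (fun n => f (u n)) atTop (𝓝 (f a)) := hfa.tendsto.comp hulim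
    have hval : Tendsto (fun n => ((u n : I) : ℝ)) atTop (𝓝 ((a : I) : ℝ)) :=
      (continuous_subtype_val.tendsto _).comp hulim
    have hev : ∀ᶠ n in atTop, ((u n : I) : ℝ) < (z : ℝ) :=
      hval.eventually (eventually_lt_nhds (Subtype.coe_lt_coe.mpr hlt))
    have hev2 : ∀ᶠ n in atTop, f (u n) ≤ f z :=
      hev.mono fun n hn => hm (hu n) hz (Subtype.coe_le_coe.mp hn.le)
    exact le_of_tendsto h2 hev2

/-- Let `f ∈ 𝒞ℳℳ` with partition set `P`.  Then the set of accumulation points of `P`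
is forward invariant: `f(Acc P) ⊆ Acc P`. -/
theorem image_accumulation_points_subset
    (f : I → I) (hf : Continuous f)
    (hmix : ∀ U V : Set I, IsOpen U → IsOpen V → U.Nonempty → V.Nonempty →
      ∃ n0 : ℕ, ∀ n ≥ n0, (f^[n] '' U ∩ V).Nonempty)
    (P : Set I) (hPclosed : IsClosed P) (hPcount : P.Countable)
    (h0 : (0 : I) ∈ P) (h1 : (1 : I) ∈ P) (hPinv : f '' P ⊆ P)
    (hmono : ∀ x ∈ Pᶜ, MonotoneOn f (connectedComponentIn Pᶜ x) ∨
      AntitoneOn f (connectedComponentIn Pᶜ x)) :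
    f '' {x : I | AccPt x (Filter.principal P)} ⊆ {x : I | AccPt x (Filter.principal P)} := by
  rintro y ⟨x, hx, rfl⟩
  simp only [mem_setOf_eq] at hx ⊢
  rw [accPt_iff_nhds] at hx ⊢
  by_cases hA : ∀ U ∈ 𝓝 x, ∃ p ∈ U ∩ P, f p ≠ f x
  · intro V hV
    obtain ⟨p, ⟨hpU, hpP⟩, hpne⟩ := hA (f ⁻¹' V) (hf.continuousAt.preimage_mem_nhds hV)
    exact ⟨f p, ⟨hpU, hPinv ⟨p, hpP, rfl⟩⟩, hpne⟩
  · exfalso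
    push_neg at hA
    obtain ⟨U, hU, hconst⟩ := hA
    set U' := Set.ordConnectedComponent U x with hU'def
    have hU' : U' ∈ 𝓝 x := Set.ordConnectedComponent_mem_nhds.mpr hU
    have hU'sub : U' ⊆ U := Set.ordConnectedComponent_subset
    obtain ⟨y1, ⟨hy1U, hy1P⟩, hy1x⟩ := hx U' hU'
    obtain ⟨y2, ⟨⟨hy2U, hy2y1⟩, hy2P⟩, hy2x⟩ :=
      hx (U' ∩ {y1}ᶜ) (inter_mem hU' (compl_singleton_mem_nhds (Ne.symm hy1x)))
    have hne : y1 ≠ y2 := fun h => hy2y1 (by simp [h])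
    set p1 := min y1 y2 with hp1def
    set p2 := max y1 y2 with hp2def
    have hp12 : p1 < p2 := min_lt_max.mpr hne
    have hp1P : p1 ∈ P := by rcases min_cases y1 y2 with ⟨h, _⟩ | ⟨h, _⟩ <;> rw [hp1def, h] <;>
      [exact hy1P; exact hy2P]
    have hp2P : p2 ∈ P := by rcases max_cases y1 y2 with ⟨h, _⟩ | ⟨h, _⟩ <;> rw [hp2def, h] <;>
      [exact hy1P; exact hy2P]
    have hp1U' : p1 ∈ U' := by rcases min_cases y1 y2 with ⟨h, _⟩ | ⟨h, _⟩ <;> rw [hp1def, h] <;>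
      [exact hy1U; exact hy2U]
    have hp2U' : p2 ∈ U' := by rcases max_cases y1 y2 with ⟨h, _⟩ | ⟨h, _⟩ <;> rw [hp2def, h] <;>
      [exact hy1U; exact hy2U]
    have hU'ord : OrdConnected U' := by rw [hU'def]; infer_instance
    have hIccU : Icc p1 p2 ⊆ U' := hU'ord.out hp1U' hp2U'
    have hconst' : ∀ p ∈ P, p ∈ Icc p1 p2 → f p = f x := fun p hpP hpI =>
      hconst p ⟨hU'sub (hIccU hpI), hpP⟩
    -- key claim: f is constant on [p1, p2]
    have hkey : ∀ z ∈ Icc p1 p2, f z = f x := by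
      intro z hzI
      by_cases hzP : z ∈ P
      · exact hconst' z hzP hzI
      · set C := connectedComponentIn Pᶜ z with hCdef
        have hzC : z ∈ C := mem_connectedComponentIn hzP
        have hCsub : C ⊆ Pᶜ := connectedComponentIn_subset _ _
        have hCord : OrdConnected C :=
          (isPreconnected_connectedComponentIn (F := Pᶜ) (x := z)).ordConnected
        have hzp1 : p1 < z := lt_of_le_of_ne hzI.1 (fun h => hzP (h ▸ hp1P))
        have hzp2 : z < p2 := lt_of_le_of_ne hzI.2 (fun h => hzP (h.symm ▸ hp2P))
        have hCIoo : C ⊆ Ioo p1 p2 := by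
          intro c hc
          constructor
          · by_contra hle
            push_neg at hle
            exact hCsub (hCord.out hc hzC ⟨hle, hzp1.le⟩) hp1P
          · by_contra hle
            push_neg at hle
            exact hCsub (hCord.out hzC hc ⟨hzp2.le, hle⟩) hp2P
        have hclos : closure C ⊆ Icc p1 p2 :=
          closure_minimal (hCIoo.trans Ioo_subset_Icc_self) isClosed_Icc
        have hcomp : IsCompact (closure C) := isClosed_closure.isCompact
        obtain ⟨b, hb⟩ := hcomp.exists_isGreatest ⟨z, subset_closure hzC⟩
        obtain ⟨a, ha⟩ := hcomp.exists_isLeast ⟨z, subset_closure hzC⟩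
        have hbP : b ∈ P := by
          rcases eq_or_lt_of_le (hclos hb.1).2 with h | h
          · exact h ▸ hp2P
          · exact greatest_boundary_mem P hPclosed hzP hb (h.trans_le le_one')
        have haP : a ∈ P := by
          rcases eq_or_lt_of_le (hclos ha.1).1 with h | h
          · exact h ▸ hp1P
          · exact least_boundary_mem P hPclosed hzP ha (lt_of_le_of_lt nonneg' h)
        have hfb : f b = f x := hconst' b hbP (hclos hb.1)
        have hfa : f a = f x := hconst' a haP (hclos ha.1)
        have hub : ∀ c ∈ C, c ≤ b := fun c hc => hb.2 (subset_closure hc)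
        have hlb : ∀ c ∈ C, a ≤ c := fun c hc => ha.2 (subset_closure hc)
        rcases hmono z hzP with hm | hm
        · exact le_antisymm
            (hfb ▸ monotoneOn_le_closure_ub hm hf.continuousAt hzC hb.1 hub)
            (hfa ▸ monotoneOn_ge_closure_lb hm hf.continuousAt hzC ha.1 hlb)
        · exact le_antisymm
            (hfa ▸ monotoneOn_ge_closure_lb (β := (↥I)ᵒᵈ) hm.dual_right hf.continuousAt hzC
              ha.1 hlb)
            (hfb ▸ monotoneOn_le_closure_ub (β := (↥I)ᵒᵈ) hm.dual_right hf.continuousAt hzC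
              hb.1 hub)
    -- mixing contradiction
    obtain ⟨r, hr1, hr2⟩ := exists_between (Subtype.coe_lt_coe.mpr hp12)
    have hrI : r ∈ I := ⟨p1.2.1.trans hr1.le, hr2.le.trans p2.2.2⟩
    have hIoo_ne : (Ioo p1 p2).Nonempty :=
      ⟨⟨r, hrI⟩, Subtype.coe_lt_coe.mp hr1, Subtype.coe_lt_coe.mp hr2⟩
    have half_mem : (1 / 2 : ℝ) ∈ I := by norm_num
    set half : I := ⟨1 / 2, half_mem⟩ with hhalf
    have h0h : (0 : I) < half := by rw [← Subtype.coe_lt_coe]; norm_num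
    have hh1 : half < (1 : I) := by rw [← Subtype.coe_lt_coe]; norm_num
    obtain ⟨n1, hn1⟩ := hmix (Ioo p1 p2) (Iio half) isOpen_Ioo isOpen_Iio hIoo_ne ⟨0, h0h⟩
    obtain ⟨n2, hn2⟩ := hmix (Ioo p1 p2) (Ioi half) isOpen_Ioo isOpen_Ioi hIoo_ne ⟨1, hh1⟩
    set m := max n1 n2 with hm
    obtain ⟨w1, ⟨u1, hu1, hw1⟩, hw1V⟩ := hn1 (m + 1) ((le_max_left _ _).trans (Nat.le_succ _))
    obtain ⟨w2, ⟨u2, hu2, hw2⟩, hw2V⟩ := hn2 (m + 1) ((le_max_right _ _).trans (Nat.le_succ _))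
    have hiter : ∀ u ∈ Ioo p1 p2, f^[m + 1] u = f^[m] (f x) := by
      intro u hu
      rw [Function.iterate_succ_apply, hkey u (Ioo_subset_Icc_self hu)]
    rw [← hw1, hiter u1 hu1] at hw1V
    rw [← hw2, hiter u2 hu2] at hw2V
    exact absurd (hw1V.trans (mem_Ioi.mp hw2V)) (lt_irrefl _)
end

section
/- Let f ∈ 𝒞ℳℳ with partition set P. If there exists a homeomorphism ψ of [0,1] such that g = ψ∘f∘ψ^{-1} is λ-Lipschitz, then the transition matrix A(f,P) admits a summable λ-subeigenvector, namely v_I = |ψ(I)| for I ∈ ℬ(P). -/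
open unitInterval Filter MeasureTheory
open scoped ENNReal NNReal

/-- The set of partition intervals `ℬ(P)`: connected components of `[0,1] ∖ P`. -/
def PartitionInterval (P : Set I) : Type :=
  {C : Set I // ∃ x ∈ Pᶜ, C = connectedComponentIn Pᶜ x}

open MeasureTheory Set Bornology in
private lemma aux_diam_le_volume {s : Set ℝ} (hs : IsPreconnected s)
    (hb : IsBounded s) : EMetric.diam s ≤ volume s := by
  rcases s.eq_empty_or_nonempty with rfl | hne
  · show Metric.ediam (∅ : Set ℝ) ≤ _; simp
  rw [show EMetric.diam s = Metric.ediam s from rfl, Real.ediam_eq hb]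
  calc ENNReal.ofReal (sSup s - sInf s) = volume (Ioo (sInf s) (sSup s)) :=
        (Real.volume_Ioo).symm
    _ ≤ volume s := measure_mono
        (IsConnected.Ioo_csInf_csSup_subset ⟨hne, hs⟩ hb.bddBelow hb.bddAbove)

open MeasureTheory Set Bornology in
private lemma aux_nullMeasurable {s : Set ℝ} (hs : IsPreconnected s)
    (hb : IsBounded s) : NullMeasurableSet s volume := by
  rcases s.eq_empty_or_nonempty with rfl | hne
  · exact MeasurableSet.empty.nullMeasurableSet
  have hIoo : Ioo (sInf s) (sSup s) ⊆ s :=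
    IsConnected.Ioo_csInf_csSup_subset ⟨hne, hs⟩ hb.bddBelow hb.bddAbove
  have hIcc : s ⊆ Icc (sInf s) (sSup s) := fun x hx => hb.subset_Icc_sInf_sSup hx
  refine NullMeasurableSet.congr
    ((measurableSet_Ioo (a := sInf s) (b := sSup s)).nullMeasurableSet) ?_
  rw [MeasureTheory.ae_eq_set]
  constructor
  · rw [Set.diff_eq_empty.2 hIoo]; simp
  · have hnull : volume ({sInf s, sSup s} : Set ℝ) = 0 :=
      Set.Finite.measure_zero (Set.toFinite _) volume
    refine measure_mono_null (fun x hx => ?_) hnull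
    obtain ⟨hx1, hx2⟩ := hx
    have := hIcc hx1
    rcases eq_or_lt_of_le this.1 with h | h
    · exact Or.inl h.symm
    rcases eq_or_lt_of_le this.2 with h' | h'
    · exact Or.inr h'
    · exact absurd ⟨h, h'⟩ hx2

set_option maxHeartbeats 1000000 in
open scoped Classical in
/-- Let `f ∈ 𝒞ℳℳ` with partition set `P`.  If some homeomorphism `ψ` of `[0,1]`
makes `g = ψ∘f∘ψ⁻¹` `λ`-Lipschitz, then the transition matrix `A(f,P)` admits a
summable `λ`-subeigenvector, namely `v_I = |ψ(I)|` for `I ∈ ℬ(P)`. -/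
theorem summable_subeigenvector_of_conjugate_lipschitz
    (f : I → I) (hf : Continuous f)
    (hmix : ∀ U V : Set I, IsOpen U → IsOpen V → U.Nonempty → V.Nonempty →
      ∃ n0 : ℕ, ∀ n ≥ n0, (f^[n] '' U ∩ V).Nonempty)
    (P : Set I) (hPclosed : IsClosed P) (hPcount : P.Countable)
    (h0 : (0 : I) ∈ P) (h1 : (1 : I) ∈ P) (hPinv : f '' P ⊆ P)
    (hmono : ∀ x ∈ Pᶜ, MonotoneOn f (connectedComponentIn Pᶜ x) ∨
      AntitoneOn f (connectedComponentIn Pᶜ x))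
    (lam : ℝ≥0) (ψ : I ≃ₜ I) (hlip : LipschitzWith lam (⇑ψ ∘ f ∘ ⇑ψ.symm)) :
    (∑' C : PartitionInterval P, EMetric.diam (ψ '' C.1) ≠ ⊤) ∧
      ∀ C : PartitionInterval P,
        ∑' D : PartitionInterval P,
            (if D.1 ⊆ f '' C.1 then (1 : ℝ≥0∞) else 0) * EMetric.diam (ψ '' D.1) ≤
          (lam : ℝ≥0∞) * EMetric.diam (ψ '' C.1) := by
  classical
  have hval : Isometry ((↑) : I → ℝ) := isometry_subtype_coe
  set s : PartitionInterval P → Set ℝ := fun C => Subtype.val '' (ψ '' C.1) with hs_def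
  have hdiam : ∀ C : PartitionInterval P,
      EMetric.diam (ψ '' C.1) = EMetric.diam (s C) := fun C => (hval.ediam_image _).symm
  have hsub : ∀ C, s C ⊆ Set.Icc (0:ℝ) 1 := by
    rintro C x ⟨y, -, rfl⟩
    exact y.2
  have hbdd : ∀ C, Bornology.IsBounded (s C) := fun C =>
    (Metric.isBounded_Icc _ _).subset (hsub C)
  have hconn : ∀ C, IsPreconnected (s C) := by
    intro C
    obtain ⟨x, hx, hC⟩ := C.2
    have h1 : IsPreconnected C.1 := by rw [hC]; exact isPreconnected_connectedComponentIn
    have h2 : IsPreconnected (ψ '' C.1) := h1.image _ ψ.continuous.continuousOn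
    exact h2.image _ continuous_subtype_val.continuousOn
  have hCdisj : ∀ C D : PartitionInterval P, C ≠ D → Disjoint C.1 D.1 := by
    intro C D hCD
    obtain ⟨x, hx, hC⟩ := C.2
    obtain ⟨y, hy, hD⟩ := D.2
    by_contra h
    rw [Set.not_disjoint_iff] at h
    obtain ⟨z, hz1, hz2⟩ := h
    apply hCD
    apply Subtype.ext
    rw [hC, hD]
    rw [hC] at hz1; rw [hD] at hz2
    exact (connectedComponentIn_eq hz1).trans (connectedComponentIn_eq hz2).symm
  have hdisj : Pairwise (Function.onFun Disjoint s) := by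
    intro C D hCD
    exact (Set.disjoint_image_iff Subtype.val_injective).2
      ((Set.disjoint_image_iff ψ.injective).2 (hCdisj C D hCD))
  have hmeas : ∀ C, NullMeasurableSet (s C) volume := fun C =>
    aux_nullMeasurable (hconn C) (hbdd C)
  have hdlv : ∀ C, EMetric.diam (s C) ≤ volume (s C) := fun C =>
    aux_diam_le_volume (hconn C) (hbdd C)
  constructor
  · have key1 : ∑' C : PartitionInterval P, EMetric.diam (ψ '' C.1) ≤ 1 := by
      calc ∑' C : PartitionInterval P, EMetric.diam (ψ '' C.1)
          = ∑' C, EMetric.diam (s C) := by simp_rw [hdiam]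
        _ ≤ ∑' C, volume (s C) := ENNReal.tsum_le_tsum hdlv
        _ ≤ volume (⋃ C, s C) :=
            tsum_meas_le_meas_iUnion_of_disjoint₀ volume hmeas
              (fun _ _ h => (hdisj h).aedisjoint)
        _ ≤ volume (Set.Icc (0:ℝ) 1) := measure_mono (Set.iUnion_subset hsub)
        _ = 1 := by simp
    exact (key1.trans_lt ENNReal.one_lt_top).ne
  · intro C
    have himg : ψ '' (f '' C.1) = (⇑ψ ∘ f ∘ ⇑ψ.symm) '' (ψ '' C.1) := by
      rw [Set.image_image, Set.image_image]
      apply Set.image_congr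
      intro x _
      simp
    set As : PartitionInterval P → Set ℝ :=
      fun D => if D.1 ⊆ f '' C.1 then s D else ∅ with hAs_def
    have hAsub : ∀ D, As D ⊆ Subtype.val '' (ψ '' (f '' C.1)) := by
      intro D
      by_cases h : D.1 ⊆ f '' C.1
      · simp only [hAs_def, if_pos h]
        exact Set.image_mono (Set.image_mono h)
      · simp [hAs_def, if_neg h]
    have hAmeas : ∀ D, NullMeasurableSet (As D) volume := by
      intro D
      by_cases h : D.1 ⊆ f '' C.1
      · simpa only [hAs_def, if_pos h] using hmeas D
      · simp only [hAs_def, if_neg h]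
        exact MeasurableSet.empty.nullMeasurableSet
    have hAdisj : Pairwise (Function.onFun Disjoint As) := by
      intro D E hDE
      have hsub' : ∀ F, As F ⊆ s F := by
        intro F
        by_cases h : F.1 ⊆ f '' C.1 <;> simp [hAs_def, h]
      exact (hdisj hDE).mono (hsub' D) (hsub' E)
    have hterm : ∀ D : PartitionInterval P,
        (if D.1 ⊆ f '' C.1 then (1 : ℝ≥0∞) else 0) * EMetric.diam (ψ '' D.1)
          ≤ volume (As D) := by
      intro D
      by_cases h : D.1 ⊆ f '' C.1
      · simp only [hAs_def, if_pos h, one_mul]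
        exact (hdiam D).le.trans (hdlv D)
      · simp [hAs_def, if_neg h]
    calc ∑' D : PartitionInterval P,
          (if D.1 ⊆ f '' C.1 then (1 : ℝ≥0∞) else 0) * EMetric.diam (ψ '' D.1)
        ≤ ∑' D, volume (As D) := ENNReal.tsum_le_tsum hterm
      _ ≤ volume (⋃ D, As D) :=
          tsum_meas_le_meas_iUnion_of_disjoint₀ volume hAmeas
            (fun _ _ h => (hAdisj h).aedisjoint)
      _ ≤ volume (Subtype.val '' (ψ '' (f '' C.1))) := measure_mono (Set.iUnion_subset hAsub)
      _ ≤ EMetric.diam (Subtype.val '' (ψ '' (f '' C.1))) := Real.volume_le_diam _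
      _ = EMetric.diam (ψ '' (f '' C.1)) := hval.ediam_image _
      _ = EMetric.diam ((⇑ψ ∘ f ∘ ⇑ψ.symm) '' (ψ '' C.1)) := by rw [himg]
      _ ≤ (lam : ℝ≥0∞) * EMetric.diam (ψ '' C.1) := hlip.ediam_image_le _
end

section
/- In a transitive countable-state topological Markov chain Σ, if the reverse Salama entropy exceeds the Gurevich entropy, then for any fixed vertex a, h_RevSal(Σ) = limsup_{n→∞} (1/n) log (number of length-n first-entrance paths to a), where a first-entrance path to a of length n is a path [i_0⋯i_n] with i_n = a and i_j ≠ a for 0 ≤ j ≤ n−1. -/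
open Filter
open scoped ENNReal

/-- `w : Fin (n+1) → S` is a path in the graph of the relation `R`. -/
def IsPath {S : Type*} (R : S → S → Prop) {n : ℕ} (w : Fin (n + 1) → S) : Prop :=
  ∀ i : Fin n, R (w i.castSucc) (w i.succ)

namespace FEAux

lemma isPath_iff {S : Type*} (R : S → S → Prop) {n : ℕ} (w : Fin (n + 1) → S) :
    IsPath R w ↔ ∀ k, ∀ _ : k < n, R (w ⟨k, by omega⟩) (w ⟨k + 1, by omega⟩) :=
  ⟨fun h k hk => h ⟨k, hk⟩, fun h i => h i.1 i.2⟩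

lemma interior_iff {S : Type*} (a : S) {n : ℕ} (w : Fin (n + 1) → S) :
    (∀ i : Fin n, w i.castSucc ≠ a) ↔ ∀ k, ∀ _ : k < n, w ⟨k, by omega⟩ ≠ a :=
  ⟨fun h k hk => h ⟨k, hk⟩, fun h i => h i.1 i.2⟩

lemma wc {S : Type*} {n : ℕ} (w : Fin (n + 1) → S) {i j : Fin (n + 1)} (h : i.1 = j.1) :
    w i = w j := congrArg w (Fin.ext h)

lemma encard_prod {α : Type*} {β : Type*} (s : Set α) (t : Set β) :
    (s ×ˢ t).encard = s.encard * t.encard := by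
  show ENat.card _ = ENat.card _ * ENat.card _
  rw [ENat.card_congr (Equiv.Set.prod s t)]
  show Cardinal.toENat _ = Cardinal.toENat _ * Cardinal.toENat _
  rw [Cardinal.mk_prod, map_mul, Cardinal.toENat_lift, Cardinal.toENat_lift]

lemma encard_biUnion_le {α : Type*} {ι : Type*} (s : Finset ι) (t : ι → Set α) :
    (⋃ j ∈ s, t j).encard ≤ ∑ j ∈ s, (t j).encard := by
  classical
  induction s using Finset.induction_on with
  | empty => simp
  | insert _ _ ha ih =>
      rw [Finset.sum_insert ha, Finset.set_biUnion_insert]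
      exact le_trans (Set.encard_union_le _ _) (add_le_add_right ih _)

section
variable {S : Type*} (R : S → S → Prop) (a : S)

def Pset (n : ℕ) : Set (Fin (n + 1) → S) := {w | w (Fin.last n) = a ∧ IsPath R w}
def Lset (n : ℕ) : Set (Fin (n + 1) → S) := {w | w 0 = a ∧ w (Fin.last n) = a ∧ IsPath R w}
def Fset (n : ℕ) : Set (Fin (n + 1) → S) :=
  {w | w (Fin.last n) = a ∧ (∀ i : Fin n, w i.castSucc ≠ a) ∧ IsPath R w}

lemma split_le (n : ℕ) :
    (Pset R a n).encard ≤
      ∑ j ∈ Finset.range (n + 1), (Fset R a j).encard * (Lset R a (n - j)).encard := by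
  classical
  set G : ℕ → Set (Fin (n + 1) → S) := fun j =>
    {w | w ∈ Pset R a n ∧ ∃ hj : j < n + 1, w ⟨j, hj⟩ = a ∧
      ∀ k, ∀ _ : k < j, ∀ hk : k < n + 1, w ⟨k, hk⟩ ≠ a} with hGdef
  have hsub : Pset R a n ⊆ ⋃ j ∈ Finset.range (n + 1), G j := by
    intro w hw
    have hex : ∃ k, ∃ h : k < n + 1, w ⟨k, h⟩ = a := ⟨n, Nat.lt_succ_self n, hw.1⟩
    set j := Nat.find hex with hj
    obtain ⟨hjlt, hja⟩ := Nat.find_spec hex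
    refine Set.mem_biUnion (Finset.mem_range.2 hjlt) ⟨hw, hjlt, hja, ?_⟩
    intro k hk hk' hka
    exact Nat.find_min hex hk ⟨hk', hka⟩
  refine le_trans (le_trans (Set.encard_mono hsub) (encard_biUnion_le _ _))
    (Finset.sum_le_sum ?_)
  intro j hj
  rw [Finset.mem_range] at hj
  have hjn : j ≤ n := by omega
  rw [← encard_prod]
  apply Set.encard_le_encard_of_injOn
    (f := fun w => ((fun i : Fin (j + 1) => w ⟨i.1, by have := i.isLt; omega⟩),
                    (fun i : Fin (n - j + 1) => w ⟨j + i.1, by have := i.isLt; omega⟩)))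
  · -- MapsTo
    rintro w ⟨⟨hlast, hpath⟩, hjlt, hja, hmin⟩
    refine Set.mk_mem_prod ⟨?_, ?_, ?_⟩ ⟨?_, ?_, ?_⟩
    · exact hja
    · exact fun i => hmin i.1 i.2 _
    · rw [isPath_iff]
      intro k hk
      exact (isPath_iff R w).1 hpath k (by omega)
    · show w ⟨j + (0 : Fin (n - j + 1)).1, _⟩ = a
      refine (wc w ?_).trans hja
      simp
    · show w ⟨j + (Fin.last (n - j)).1, _⟩ = a
      refine (wc w ?_).trans hlast
      simp [Fin.val_last]
      omega
    · rw [isPath_iff]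
      intro k hk
      have h2 := (isPath_iff R w).1 hpath (j + k) (by omega)
      exact h2
  · -- InjOn
    rintro w hw w' hw' heq
    have h1 := congrArg Prod.fst heq
    have h2 := congrArg Prod.snd heq
    simp only at h1 h2
    funext i
    rcases i with ⟨iv, hi⟩
    by_cases hij : iv ≤ j
    · exact congrFun h1 ⟨iv, by omega⟩
    · have := congrFun h2 ⟨iv - j, by omega⟩
      simp only at this
      refine (wc w (show iv = j + (iv - j) by omega)).trans
        (this.trans (wc w' (show j + (iv - j) = iv by omega)))
lemma Fset_subset_Pset (n : ℕ) : Fset R a n ⊆ Pset R a n := fun _ hw => ⟨hw.1, hw.2.2⟩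

variable {R a}

/-- prepend a vertex -/
def pre (u : S) {j : ℕ} (w : Fin (j + 1) → S) : Fin (j + 2) → S :=
  fun i => if _ : i.1 = 0 then u else w ⟨i.1 - 1, by have := i.isLt; omega⟩

lemma pre_zero (u : S) {j : ℕ} (w : Fin (j + 1) → S) : pre u w 0 = u := rfl

lemma pre_mk_succ (u : S) {j : ℕ} (w : Fin (j + 1) → S) (k : ℕ) (h : k + 1 < j + 2) :
    pre u w ⟨k + 1, h⟩ = w ⟨k, by omega⟩ := rfl

lemma pre_last (u : S) {j : ℕ} (w : Fin (j + 1) → S) :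
    pre u w (Fin.last (j + 1)) = w (Fin.last j) := rfl

lemma prepend_le (pred : S → S) (hpred : ∀ v, R (pred v) v) (j : ℕ) :
    (Fset R a j).encard ≤ (Fset R a (j + 1)).encard + (Lset R a (j + 1)).encard := by
  refine le_trans ?_ (Set.encard_union_le _ _)
  apply Set.encard_le_encard_of_injOn (f := fun w => pre (pred (w 0)) w)
  · rintro w ⟨hlast, hint, hpath⟩
    have hplast : pre (pred (w 0)) w (Fin.last (j + 1)) = a := (pre_last _ w).trans hlast
    have hppath : IsPath R (pre (pred (w 0)) w) := by
      rw [isPath_iff]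
      intro k hk
      match k with
      | 0 =>
        show R (pre (pred (w 0)) w ⟨0, by omega⟩) (pre (pred (w 0)) w ⟨1, by omega⟩)
        rw [show (⟨1, by omega⟩ : Fin (j + 2)) = ⟨0 + 1, by omega⟩ from rfl,
          pre_mk_succ]
        exact hpred (w 0)
      | k + 1 =>
        rw [pre_mk_succ, show (⟨k + 1 + 1, by omega⟩ : Fin (j + 2)) = ⟨(k + 1) + 1, by omega⟩
          from rfl, pre_mk_succ]
        exact (isPath_iff R w).1 hpath k (by omega)
    by_cases hu : pred (w 0) = a
    · right
      exact ⟨hu, hplast, hppath⟩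
    · left
      refine ⟨hplast, ?_, hppath⟩
      rw [interior_iff]
      intro k hk
      match k with
      | 0 => exact hu
      | k + 1 =>
        rw [pre_mk_succ]
        exact (interior_iff a w).1 hint k (by omega)
  · intro w _ w' _ heq
    simp only at heq
    funext i
    have := congrFun heq ⟨i.1 + 1, by have := i.isLt; omega⟩
    rw [pre_mk_succ, pre_mk_succ] at this
    exact (wc w rfl).trans (this.trans (wc w' rfl))

/-- glue a loop on the right -/
def glue {m d : ℕ} (w : Fin (m + 1) → S) (v : Fin (d + 1) → S) : Fin (m + d + 1) → S :=
  fun i => if _ : i.1 ≤ m then w ⟨i.1, by omega⟩ else v ⟨i.1 - m, by have := i.isLt; omega⟩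

lemma glue_left {m d : ℕ} (w : Fin (m + 1) → S) (v : Fin (d + 1) → S) (k : ℕ)
    (h : k < m + d + 1) (hk : k ≤ m) : glue w v ⟨k, h⟩ = w ⟨k, by omega⟩ := dif_pos hk

lemma glue_right {m d : ℕ} (w : Fin (m + 1) → S) (v : Fin (d + 1) → S) (k : ℕ)
    (h : k < m + d + 1) (hk : ¬ k ≤ m) : glue w v ⟨k, h⟩ = v ⟨k - m, by omega⟩ := dif_neg hk

lemma glue_isPath {m d : ℕ} {w : Fin (m + 1) → S} {v : Fin (d + 1) → S}
    (hw : IsPath R w) (hv : IsPath R v) (hwv : w (Fin.last m) = v 0) :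
    IsPath R (glue w v) := by
  rw [isPath_iff]
  intro k hk
  by_cases h1 : k + 1 ≤ m
  · rw [glue_left _ _ _ _ (by omega), glue_left _ _ _ _ h1]
    exact (isPath_iff R w).1 hw k (by omega)
  · by_cases h2 : k ≤ m
    · have hkm : k = m := by omega
      rw [glue_left _ _ _ _ h2, glue_right _ _ _ _ h1]
      have e1 : w ⟨k, by omega⟩ = v 0 := (wc w (hkm : k = (Fin.last m).1)).trans hwv
      have e2 : v ⟨k + 1 - m, by omega⟩ = v ⟨0 + 1, by omega⟩ :=
        wc v (show k + 1 - m = 0 + 1 by omega)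
      rw [e1, e2]
      exact (isPath_iff R v).1 hv 0 (by omega)
    · rw [glue_right _ _ _ _ h2, glue_right _ _ _ _ h1]
      have e2 : v ⟨k + 1 - m, by omega⟩ = v ⟨(k - m) + 1, by omega⟩ :=
        wc v (show k + 1 - m = (k - m) + 1 by omega)
      rw [e2]
      exact (isPath_iff R v).1 hv (k - m) (by omega)

lemma loop_ext_le {d : ℕ} {v : Fin (d + 1) → S} (hv : v ∈ Lset R a d) (m : ℕ) :
    (Lset R a m).encard ≤ (Lset R a (m + d)).encard := by
  apply Set.encard_le_encard_of_injOn (f := fun w => glue w v)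
  · rintro w ⟨h0, hlast, hpath⟩
    refine ⟨?_, ?_, glue_isPath hpath hv.2.2 (hlast.trans hv.1.symm)⟩
    · show glue w v ⟨0, by omega⟩ = a
      rw [glue_left _ _ _ _ (by omega)]
      exact h0
    · show glue w v ⟨m + d, by omega⟩ = a
      by_cases hd : m + d ≤ m
      · rw [glue_left _ _ _ _ hd]
        exact (wc w (show m + d = m by omega)).trans hlast
      · rw [glue_right _ _ _ _ hd]
        exact (wc v (show m + d - m = d by omega)).trans hv.2.1
  · intro w _ w' _ heq
    simp only at heq
    funext i
    have := congrFun heq ⟨i.1, by have := i.isLt; omega⟩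
    rw [glue_left _ _ _ _ (by have := i.isLt; omega),
      glue_left _ _ _ _ (by have := i.isLt; omega)] at this
    exact (wc w rfl).trans (this.trans (wc w' rfl))


end

lemma growth {ε M' : ℝ} (hε : 0 < ε) (hM : 1 ≤ M') :
    ∀ᶠ n : ℕ in atTop, ((n : ℝ) + 1) * M' ≤ Real.exp (ε * n) := by
  have h1 : Tendsto (fun x : ℝ => Real.exp x / x) atTop atTop := by
    simpa using Real.tendsto_exp_div_pow_atTop 1
  have h2 : Tendsto (fun n : ℕ => ε * (n : ℝ)) atTop atTop :=
    tendsto_natCast_atTop_atTop.const_mul_atTop hε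
  have h3 := (h1.comp h2).eventually_ge_atTop (2 * M' / ε)
  filter_upwards [h3, eventually_ge_atTop 1] with n hn hn1
  have hn1' : (1 : ℝ) ≤ n := by exact_mod_cast hn1
  have hεn : 0 < ε * n := by nlinarith
  simp only [Function.comp] at hn
  have h4 : 2 * M' / ε * (ε * n) ≤ Real.exp (ε * n) := (le_div_iff₀ hεn).1 hn
  have h5 : 2 * M' / ε * (ε * n) = 2 * M' * n := by field_simp
  nlinarith

lemma limsup_top_of_freq_top {X : ℕ → ℝ≥0∞} (h : ∀ N : ℕ, ∃ n, N ≤ n ∧ 1 ≤ n ∧ X n = ⊤) :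
    limsup (fun n : ℕ => ENNReal.log (X n) / (n : EReal)) atTop = ⊤ := by
  refine top_unique (le_limsup_of_frequently_le ?_)
  rw [frequently_atTop]
  intro N
  obtain ⟨n, hNn, h1n, hXn⟩ := h N
  refine ⟨n, hNn, ?_⟩
  rw [hXn, ENNReal.log_top, EReal.top_div_of_pos_ne_top ?_ (EReal.natCast_ne_top n)]
  exact_mod_cast h1n

lemma le_exp_of_div_lt {X : ℝ≥0∞} {c : ℝ} {n : ℕ} (hn : 1 ≤ n)
    (h : ENNReal.log X / (n : EReal) < (c : EReal)) :
    X ≤ EReal.exp ((c * n : ℝ) : EReal) := by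
  have hpos : (0 : EReal) < (n : EReal) := by exact_mod_cast hn
  have hne : (n : EReal) ≠ ⊤ := EReal.natCast_ne_top n
  have h3 : ENNReal.log X < (c : EReal) * n :=
    not_le.1 fun hle => (not_le.2 h) ((EReal.le_div_iff_mul_le hpos hne).2 hle)
  have h4 : ENNReal.log X < ((c * (n : ℝ) : ℝ) : EReal) := by
    rwa [EReal.coe_mul, EReal.coe_coe_eq_natCast]
  exact (ENNReal.log_lt_log_iff.1 (h4.trans_eq (EReal.log_exp _).symm)).le

lemma exp_ne_zero' (x : ℝ) : EReal.exp (x : EReal) ≠ 0 := by simp [Real.exp_pos]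
lemma exp_ne_top' (x : ℝ) : EReal.exp (x : EReal) ≠ ⊤ := by simp

lemma bound_all {c : ℝ} {N : ℕ} (X : ℕ → ℝ≥0∞) (hXt : ∀ k, X k ≠ ⊤)
    (hXb : ∀ n, N ≤ n → X n ≤ EReal.exp ((c * n : ℝ) : EReal)) :
    ∃ C : ℝ≥0∞, C ≠ ⊤ ∧ 1 ≤ C ∧ ∀ k, X k ≤ C * EReal.exp ((c * k : ℝ) : EReal) := by
  refine ⟨((Finset.range N).sup fun k => X k / EReal.exp ((c * k : ℝ) : EReal)) ⊔ 1,
    ?_, le_max_right _ _, ?_⟩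
  · refine ne_of_lt (max_lt ?_ ENNReal.one_lt_top)
    refine (Finset.sup_lt_iff (by simp)).2 fun k _ => ?_
    exact ENNReal.div_lt_top (hXt k) (exp_ne_zero' _)
  · intro k
    by_cases hkN : k < N
    · have hXk : X k = X k / EReal.exp ((c * k : ℝ) : EReal) * EReal.exp ((c * k : ℝ) : EReal) :=
        (ENNReal.div_mul_cancel (exp_ne_zero' _) (exp_ne_top' _)).symm
      rw [hXk]
      refine mul_le_mul_left ?_ _
      exact le_trans (Finset.le_sup (f := fun k => X k / EReal.exp ((c * k : ℝ) : EReal))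
        (Finset.mem_range.2 hkN)) (le_max_left _ _)
    · calc X k ≤ EReal.exp ((c * k : ℝ) : EReal) := hXb k (by omega)
        _ = 1 * EReal.exp ((c * k : ℝ) : EReal) := (one_mul _).symm
        _ ≤ _ := mul_le_mul_left (le_max_right _ _) _

theorem analytic_main (F L P : ℕ → ℝ≥0∞)
    (hFP : ∀ n, F n ≤ P n)
    (hsum : ∀ n, P n ≤ ∑ j ∈ Finset.range (n + 1), F j * L (n - j))
    (hFstep : ∀ j, F j ≤ F (j + 1) + L (j + 1))
    (hLstep : ∃ d, 1 ≤ d ∧ ∀ m, L m ≤ L (m + d))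
    (hgt : limsup (fun n : ℕ => ENNReal.log (L n) / (n : EReal)) atTop
         < limsup (fun n : ℕ => ENNReal.log (P n) / (n : EReal)) atTop) :
    limsup (fun n : ℕ => ENNReal.log (P n) / (n : EReal)) atTop
      = limsup (fun n : ℕ => ENNReal.log (F n) / (n : EReal)) atTop := by
  classical
  have hmono : limsup (fun n : ℕ => ENNReal.log (F n) / (n : EReal)) atTop
      ≤ limsup (fun n : ℕ => ENNReal.log (P n) / (n : EReal)) atTop := by
    refine limsup_le_limsup (Eventually.of_forall fun n => ?_)
    exact EReal.div_le_div_right_of_nonneg (by exact_mod_cast Nat.zero_le n)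
      (ENNReal.log_monotone (hFP n))
  refine le_antisymm ?_ hmono
  by_contra h
  push_neg at h
  obtain ⟨c, hc1, hc2⟩ := EReal.exists_between_coe_real (max_lt h hgt)
  have hcF : limsup (fun n : ℕ => ENNReal.log (F n) / (n : EReal)) atTop < (c : EReal) :=
    lt_of_le_of_lt (le_max_left _ _) hc1
  have hcL : limsup (fun n : ℕ => ENNReal.log (L n) / (n : EReal)) atTop < (c : EReal) :=
    lt_of_le_of_lt (le_max_right _ _) hc1
  -- no loop count is infinite
  have hLne : ∀ k, L k ≠ ⊤ := by
    intro k hk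
    obtain ⟨d, hd1, hdle⟩ := hLstep
    have hall : ∀ t, L (k + t * d) = ⊤ := by
      intro t
      induction t with
      | zero => simpa using hk
      | succ t ih =>
        have h2 : L (k + t * d + d) = ⊤ := top_unique (ih ▸ hdle (k + t * d))
        have h3 : k + (t + 1) * d = k + t * d + d := by ring
        rw [h3]; exact h2
    have htop : limsup (fun n : ℕ => ENNReal.log (L n) / (n : EReal)) atTop = ⊤ := by
      refine limsup_top_of_freq_top fun N => ⟨k + (N + 1) * d, ?_, ?_, hall (N + 1)⟩
      · have := Nat.le_mul_of_pos_right (N + 1) hd1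
        omega
      · have := Nat.le_mul_of_pos_right (N + 1) hd1
        omega
    rw [htop] at hcL
    exact not_top_lt hcL
  -- no first-entrance count is infinite
  have hFne : ∀ k, F k ≠ ⊤ := by
    intro k hk
    have hall : ∀ m, k ≤ m → F m = ⊤ := by
      intro m hm
      induction m, hm using Nat.le_induction with
      | base => exact hk
      | succ m hm ih =>
        rcases ENNReal.add_eq_top.1 (top_unique (ih ▸ hFstep m)) with h' | h'
        · exact h'
        · exact absurd h' (hLne _)
    have htop : limsup (fun n : ℕ => ENNReal.log (F n) / (n : EReal)) atTop = ⊤ := by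
      refine limsup_top_of_freq_top fun N =>
        ⟨max k (max N 1), by omega, by omega, hall _ (by omega)⟩
    rw [htop] at hcF
    exact not_top_lt hcF
  -- eventual exponential bounds
  have hevF : ∀ᶠ n in atTop, ENNReal.log (F n) / (n : EReal) < (c : EReal) :=
    eventually_lt_of_limsup_lt hcF
  have hevL : ∀ᶠ n in atTop, ENNReal.log (L n) / (n : EReal) < (c : EReal) :=
    eventually_lt_of_limsup_lt hcL
  obtain ⟨N0, hN0⟩ := eventually_atTop.1 (hevF.and hevL)
  obtain ⟨CF, hCFt, hCF1, hCFb⟩ := bound_all (N := max N0 1) F hFne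
    (fun n hn => le_exp_of_div_lt (by omega) (hN0 n (by omega)).1)
  obtain ⟨CL, hCLt, hCL1, hCLb⟩ := bound_all (N := max N0 1) L hLne
    (fun n hn => le_exp_of_div_lt (by omega) (hN0 n (by omega)).2)
  set M := CF * CL with hMdef
  have hM1 : 1 ≤ M := by
    calc (1 : ℝ≥0∞) = 1 * 1 := (mul_one 1).symm
      _ ≤ CF * CL := mul_le_mul' hCF1 hCL1
  have hMt : M ≠ ⊤ := ENNReal.mul_ne_top hCFt hCLt
  have key : ∀ n : ℕ, P n ≤ ((n + 1 : ℕ) : ℝ≥0∞) * M * EReal.exp ((c * n : ℝ) : EReal) := by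
    intro n
    refine (hsum n).trans ?_
    have hterm : ∀ j ∈ Finset.range (n + 1),
        F j * L (n - j) ≤ M * EReal.exp ((c * n : ℝ) : EReal) := by
      intro j hj
      rw [Finset.mem_range] at hj
      have hjn : j ≤ n := by omega
      calc F j * L (n - j)
          ≤ (CF * EReal.exp ((c * j : ℝ) : EReal)) * (CL * EReal.exp ((c * ((n - j : ℕ) : ℝ) : ℝ) : EReal)) :=
            mul_le_mul' (hCFb j) (hCLb (n - j))
        _ = M * (EReal.exp ((c * j : ℝ) : EReal) * EReal.exp ((c * ((n - j : ℕ) : ℝ) : ℝ) : EReal)) :=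
            mul_mul_mul_comm _ _ _ _
        _ = M * EReal.exp ((c * n : ℝ) : EReal) := by
            congr 1
            rw [← EReal.exp_add, ← EReal.coe_add]
            congr 1
            rw [EReal.coe_eq_coe_iff, Nat.cast_sub hjn]
            ring
    refine le_trans (Finset.sum_le_sum hterm) ?_
    rw [Finset.sum_const, Finset.card_range, nsmul_eq_mul, ← mul_assoc]
  -- limsup ≤ c + ε for every ε > 0
  have hle : ∀ ε : ℝ, 0 < ε →
      limsup (fun n : ℕ => ENNReal.log (P n) / (n : EReal)) atTop ≤ ((c + ε : ℝ) : EReal) := by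
    intro ε hε
    have hMr : 1 ≤ M.toReal := by
      have := ENNReal.toReal_mono hMt hM1
      simpa using this
    refine limsup_le_of_le (by isBoundedDefault) ?_
    filter_upwards [growth hε hMr, eventually_ge_atTop 1] with n hg hn1
    show ENNReal.log (P n) / (n : EReal) ≤ ((c + ε : ℝ) : EReal)
    have hpos : (0 : EReal) < (n : EReal) := by exact_mod_cast hn1
    have hnet : (n : EReal) ≠ ⊤ := EReal.natCast_ne_top n
    rw [EReal.div_le_iff_le_mul hpos hnet]
    have h5 : ((n + 1 : ℕ) : ℝ≥0∞) * M ≤ EReal.exp ((ε * n : ℝ) : EReal) := by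
      have he : ((n + 1 : ℕ) : ℝ≥0∞) * M = ENNReal.ofReal (((n : ℝ) + 1) * M.toReal) := by
        rw [ENNReal.ofReal_mul (by positivity), ENNReal.ofReal_toReal hMt]
        congr 1
        rw [ENNReal.ofReal_add (by positivity) zero_le_one, ENNReal.ofReal_natCast,
          ENNReal.ofReal_one]
        push_cast
        ring
      rw [he, EReal.exp_coe]
      exact ENNReal.ofReal_le_ofReal hg
    have h6 : P n ≤ EReal.exp (((c + ε) * n : ℝ) : EReal) := by
      refine (key n).trans ?_
      calc ((n + 1 : ℕ) : ℝ≥0∞) * M * EReal.exp ((c * n : ℝ) : EReal)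
          ≤ EReal.exp ((ε * n : ℝ) : EReal) * EReal.exp ((c * n : ℝ) : EReal) :=
            mul_le_mul_left h5 _
        _ = _ := by
            rw [← EReal.exp_add, ← EReal.coe_add]
            congr 1
            rw [EReal.coe_eq_coe_iff]
            ring
    have h7 : ENNReal.log (P n) ≤ (((c + ε) * (n : ℝ) : ℝ) : EReal) :=
      le_trans (ENNReal.log_monotone h6) (le_of_eq (EReal.log_exp _))
    rw [EReal.coe_mul, EReal.coe_coe_eq_natCast] at h7
    rwa [mul_comm]
  have hfin : limsup (fun n : ℕ => ENNReal.log (P n) / (n : EReal)) atTop ≤ (c : EReal) := by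
    by_contra hcon
    push_neg at hcon
    obtain ⟨x, hx1, hx2⟩ := EReal.exists_between_coe_real hcon
    have hcx : c < x := by exact_mod_cast hx1
    have h8 := hle (x - c) (by linarith)
    rw [show c + (x - c) = x by ring] at h8
    exact absurd (h8.trans_lt hx2) (lt_irrefl _)
  exact absurd hc2 (not_lt.2 hfin)


theorem main_glue {S : Type*} (R : S → S → Prop) (a : S)
    (hirr : ∀ a b : S, ∃ n : ℕ, ∃ w : Fin (n + 2) → S,
      w 0 = a ∧ w (Fin.last (n + 1)) = b ∧ IsPath R w) :
    limsup (fun n : ℕ => ENNReal.log (((Lset R a n).encard : ℝ≥0∞)) / (n : EReal)) atTop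
      < limsup (fun n : ℕ => ENNReal.log (((Pset R a n).encard : ℝ≥0∞)) / (n : EReal)) atTop →
    limsup (fun n : ℕ => ENNReal.log (((Pset R a n).encard : ℝ≥0∞)) / (n : EReal)) atTop
      = limsup (fun n : ℕ => ENNReal.log (((Fset R a n).encard : ℝ≥0∞)) / (n : EReal)) atTop := by
  intro hgt
  classical
  have hpredE : ∀ v : S, ∃ u, R u v := by
    intro v
    obtain ⟨n, w, h0, hl, hp⟩ := hirr a v
    refine ⟨w (Fin.castSucc (Fin.last n)), ?_⟩
    have h2 := hp (Fin.last n)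
    rw [Fin.succ_last, hl] at h2
    exact h2
  choose pred hpred using hpredE
  have hFP : ∀ n, ((Fset R a n).encard : ℝ≥0∞) ≤ ((Pset R a n).encard : ℝ≥0∞) :=
    fun n => ENat.toENNReal_le.2 (Set.encard_mono (Fset_subset_Pset R a n))
  have hsum : ∀ n, ((Pset R a n).encard : ℝ≥0∞) ≤
      ∑ j ∈ Finset.range (n + 1),
        ((Fset R a j).encard : ℝ≥0∞) * ((Lset R a (n - j)).encard : ℝ≥0∞) := by
    intro n
    refine le_trans (ENat.toENNReal_le.2 (split_le R a n)) (le_of_eq ?_)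
    calc ((∑ j ∈ Finset.range (n + 1),
            (Fset R a j).encard * (Lset R a (n - j)).encard : ℕ∞) : ℝ≥0∞)
        = ∑ j ∈ Finset.range (n + 1),
            (((Fset R a j).encard * (Lset R a (n - j)).encard : ℕ∞) : ℝ≥0∞) :=
          map_sum ENat.toENNRealRingHom _ _
      _ = _ := Finset.sum_congr rfl fun j _ => ENat.toENNReal_mul _ _
  have hFstep : ∀ j, ((Fset R a j).encard : ℝ≥0∞) ≤
      ((Fset R a (j + 1)).encard : ℝ≥0∞) + ((Lset R a (j + 1)).encard : ℝ≥0∞) := by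
    intro j
    refine le_trans (ENat.toENNReal_le.2 (prepend_le pred hpred j)) (le_of_eq ?_)
    exact ENat.toENNReal_add _ _
  have hLstep : ∃ d, 1 ≤ d ∧ ∀ m,
      ((Lset R a m).encard : ℝ≥0∞) ≤ ((Lset R a (m + d)).encard : ℝ≥0∞) := by
    obtain ⟨n0, v, h0, hl, hp⟩ := hirr a a
    exact ⟨n0 + 1, by omega, fun m => ENat.toENNReal_le.2 (loop_ext_le ⟨h0, hl, hp⟩ m)⟩
  exact analytic_main _ _ _ hFP hsum hFstep hLstep hgt

end FEAux

/-- In a transitive countable-state topological Markov chain, if the reverse Salama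
entropy exceeds the Gurevich entropy, then for any fixed vertex `a` the reverse Salama
entropy equals `limsup_n (1/n) log` (number of length-`n` first-entrance paths to `a`). -/
theorem revSalamaEntropy_eq_limsup_firstEntrance {S : Type*} [Countable S]
    (R : S → S → Prop)
    (hirr : ∀ a b : S, ∃ n : ℕ, ∃ w : Fin (n + 2) → S,
      w 0 = a ∧ w (Fin.last (n + 1)) = b ∧ IsPath R w)
    (a : S) (hGur hRevSal : EReal)
    (hG : hGur = Filter.limsup (fun n : ℕ =>
      ENNReal.log (({w : Fin (n + 1) → S | w 0 = a ∧ w (Fin.last n) = a ∧ IsPath R w}.encard :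
        ℝ≥0∞)) / (n : EReal)) Filter.atTop)
    (hR : hRevSal = Filter.limsup (fun n : ℕ =>
      ENNReal.log (({w : Fin (n + 1) → S | w (Fin.last n) = a ∧ IsPath R w}.encard :
        ℝ≥0∞)) / (n : EReal)) Filter.atTop)
    (hgt : hGur < hRevSal) :
    hRevSal = Filter.limsup (fun n : ℕ =>
      ENNReal.log (({w : Fin (n + 1) → S |
          w (Fin.last n) = a ∧ (∀ i : Fin n, w i.castSucc ≠ a) ∧ IsPath R w}.encard :
        ℝ≥0∞)) / (n : EReal)) Filter.atTop := by
  rw [hG, hR] at hgt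
  rw [hR]
  exact FEAux.main_glue R a hirr hgt
end
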